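/- arXiv:0802.2837 — 3 statements merged into one kernel-verified Lean document; each statement's English description precedes it below -/
import Mathlib

section
/- If a countable group G carries a non-degenerate probability measure μ of finite entropy whose asymptotic entropy h(G, μ) = lim_n H(μ^n)/n vanishes, then G is amenable. -/
open List

/-! ### Amenability -/

/-- A group is amenable if it carries a left-invariant finitely additive
probability measure defined on all subsets. -/
def Amenable (G : Type*) [Group G] : Prop :=
  ∃ m : Set G → ℝ,
    m Set.univ = 1 ∧
    (∀ A : Set G, 0 ≤ m A) ∧
    (∀ A B : Set G, Disjoint A B → m (A ∪ B) = m A + m B) ∧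
    (∀ (g : G) (A : Set G), m ((g * ·) '' A) = m A)


/-! ### Entropy, convolutions and random walks -/

open scoped ENNReal

/-- The entropy `H(m) = -∑ m(x) log m(x) ∈ [0,∞]` of a discrete probability
measure. -/
noncomputable def entropy {α : Type*} (m : PMF α) : ℝ≥0∞ :=
  ∑' x, ENNReal.ofReal (Real.negMulLog (m x).toReal)

/-- Convolution of probability measures on a group:
`(μ * ν) (g) = ∑_h μ(h) ν(h⁻¹g)`. -/
noncomputable def conv {G : Type*} [Group G] (μ ν : PMF G) : PMF G :=
  μ.bind fun g => ν.map fun h => g * h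

/-- Convolution powers `μ^n` of a probability measure on a group
(`μ^0` is the point mass at the identity). -/
noncomputable def convPow {G : Type*} [Group G] (μ : PMF G) : ℕ → PMF G
  | 0 => PMF.pure 1
  | n + 1 => conv (convPow μ n) μ

/-- The convex combination `p·μ + q·ν` of two probability measures. -/
noncomputable def mixture {α : Type*} (p q : ℝ≥0∞) (μ ν : PMF α) (h : p + q = 1) :
    PMF α :=
  ⟨fun x => p * μ x + q * ν x, by
    rw [ENNReal.summable.hasSum_iff, ENNReal.tsum_add, ENNReal.tsum_mul_left,
      ENNReal.tsum_mul_left, μ.tsum_coe, ν.tsum_coe, mul_one, mul_one, h]⟩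


open Real ENNReal Filter

noncomputable def klT (a b : ℝ) : ℝ := a * Real.log a - a * Real.log b - a + b

lemma klT_add_negMulLog (a b : ℝ) : klT a b + Real.negMulLog a = a * (-Real.log b - 1) + b := by
  simp [klT, Real.negMulLog]; ring

lemma klT_nonneg {a b : ℝ} (ha : 0 ≤ a) (hb : 0 ≤ b) (h0 : b = 0 → a = 0) : 0 ≤ klT a b := by
  rcases eq_or_lt_of_le ha with h | hA
  · simp [klT, ← h]; linarith
  · have hb' : 0 < b := by
      rcases eq_or_lt_of_le hb with h | h
      · exact absurd (h0 h.symm) (ne_of_gt hA)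
      · exact h
    have key : Real.log (b / a) ≤ b / a - 1 := Real.log_le_sub_one_of_pos (by positivity)
    rw [Real.log_div (ne_of_gt hb') (ne_of_gt hA)] at key
    have := mul_le_mul_of_nonneg_left key (le_of_lt hA)
    have h2 : a * (b / a) = b := by field_simp
    unfold klT
    nlinarith

lemma sq_sqrt_sub_le_klT {a b : ℝ} (ha : 0 ≤ a) (hb : 0 ≤ b) (h0 : b = 0 → a = 0) :
    (Real.sqrt a - Real.sqrt b) ^ 2 ≤ klT a b := by
  rcases eq_or_lt_of_le ha with h | hA
  · simp [klT, ← h, Real.sq_sqrt hb]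
  · have hb' : 0 < b := by
      rcases eq_or_lt_of_le hb with h | h
      · exact absurd (h0 h.symm) (ne_of_gt hA)
      · exact h
    set u : ℝ := Real.sqrt b / Real.sqrt a with hu
    have hsa : 0 < Real.sqrt a := Real.sqrt_pos.mpr hA
    have hsb : 0 < Real.sqrt b := Real.sqrt_pos.mpr hb'
    have hu' : 0 < u := by positivity
    have key : Real.log u ≤ u - 1 := Real.log_le_sub_one_of_pos hu'
    have hlogu : Real.log u = Real.log b / 2 - Real.log a / 2 := by
      rw [hu, Real.log_div (ne_of_gt hsb) (ne_of_gt hsa), Real.log_sqrt hb, Real.log_sqrt ha]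
    have h2 : Real.sqrt a ^ 2 = a := Real.sq_sqrt ha
    have h3 : Real.sqrt b ^ 2 = b := Real.sq_sqrt hb
    have h4 : a * u = Real.sqrt a * Real.sqrt b := by
      rw [hu]; field_simp; nlinarith
    have key2 := mul_le_mul_of_nonneg_left key (by positivity : (0:ℝ) ≤ 2 * a)
    rw [hlogu] at key2
    unfold klT
    nlinarith

open Real ENNReal

namespace KV

variable {α β γ : Type*}

noncomputable def rv (m : PMF α) (x : α) : ℝ := (m x).toReal

lemma rv_nonneg (m : PMF α) (x : α) : 0 ≤ rv m x := ENNReal.toReal_nonneg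

lemma toReal_le_one {a : ℝ≥0∞} (h : a ≤ 1) : a.toReal ≤ 1 := by
  simpa using ENNReal.toReal_mono one_ne_top h

lemma rv_le_one (m : PMF α) (x : α) : rv m x ≤ 1 := toReal_le_one (m.coe_le_one x)

lemma ofReal_rv (m : PMF α) (x : α) : ENNReal.ofReal (rv m x) = m x :=
  ENNReal.ofReal_toReal (m.apply_ne_top x)

lemma negMulLog_rv_nonneg (m : PMF α) (x : α) : 0 ≤ Real.negMulLog (rv m x) :=
  Real.negMulLog_nonneg (rv_nonneg m x) (rv_le_one m x)

lemma summable_rv (m : PMF α) : Summable (rv m) :=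
  ENNReal.summable_toReal (by rw [m.tsum_coe]; exact one_ne_top)

lemma tsum_rv (m : PMF α) : ∑' x, rv m x = 1 := by
  simp only [rv]
  rw [← ENNReal.tsum_toReal_eq (fun x => m.apply_ne_top x), m.tsum_coe]
  simp

lemma tsum_ofReal_rv (m : PMF α) : ∑' x, ENNReal.ofReal (rv m x) = 1 := by
  simp_rw [ofReal_rv]; exact m.tsum_coe

lemma entropy_pure (a : α) : entropy (PMF.pure a) = 0 := by
  classical
  rw [entropy, ENNReal.tsum_eq_zero]
  intro x
  by_cases h : x = a <;> simp [PMF.pure_apply, h]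

lemma map_equiv_apply (e : α ≃ β) (m : PMF α) (y : β) : (m.map ⇑e) y = m (e.symm y) := by
  classical
  rw [PMF.map_apply]
  rw [tsum_eq_single (e.symm y)]
  · simp
  · intro b hb
    rw [if_neg]
    intro hy
    exact hb (by simp [hy])

lemma entropy_map_equiv (e : α ≃ β) (m : PMF α) : entropy (m.map ⇑e) = entropy m := by
  rw [entropy, entropy,
    ← Equiv.tsum_eq e (fun y => ENNReal.ofReal (Real.negMulLog ((m.map ⇑e) y).toReal))]
  congr 1
  funext x
  rw [map_equiv_apply e m (e x)]
  simp

lemma entropy_map_le (f : α → β) (m : PMF α) : entropy (m.map f) ≤ entropy m := by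
  classical
  rw [entropy, entropy]
  have key : ∀ y : β, ENNReal.ofReal (Real.negMulLog ((m.map f) y).toReal)
      ≤ ∑' x, if y = f x then ENNReal.ofReal (Real.negMulLog (rv m x)) else 0 := by
    intro y
    set s : ℝ := ((m.map f) y).toReal with hs
    have hs0 : 0 ≤ s := ENNReal.toReal_nonneg
    rcases eq_or_lt_of_le hs0 with h0 | hpos
    · rw [← h0]; simp
    · have hs1 : s ≤ 1 := toReal_le_one ((m.map f).coe_le_one y)
      set c : ℝ := - Real.log s with hc
      have hc0 : 0 ≤ c := by
        rw [hc, neg_nonneg]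
        exact Real.log_nonpos (le_of_lt hpos) hs1
      have step1 : ENNReal.ofReal (Real.negMulLog s) = ENNReal.ofReal c * ((m.map f) y) := by
        have h1 : Real.negMulLog s = c * s := by rw [Real.negMulLog, hc]; ring
        rw [h1, ENNReal.ofReal_mul hc0]
        congr 1
        rw [hs]
        exact ENNReal.ofReal_toReal ((m.map f).apply_ne_top y)
      rw [step1, PMF.map_apply, ← ENNReal.tsum_mul_left]
      refine ENNReal.tsum_le_tsum (fun x => ?_)
      by_cases hx : y = f x
      · rw [if_pos hx, if_pos hx, ← ofReal_rv m x, ← ENNReal.ofReal_mul hc0]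
        apply ENNReal.ofReal_le_ofReal
        rcases eq_or_lt_of_le (rv_nonneg m x) with h | h
        · rw [← h]; simp
        · have hle : rv m x ≤ s := by
            rw [hs]
            have h1 : m x ≤ (m.map f) y := by
              rw [PMF.map_apply]
              have h2 := ENNReal.le_tsum (f := fun x' => if y = f x' then m x' else 0) x
              rwa [if_pos hx] at h2
            exact ENNReal.toReal_mono ((m.map f).apply_ne_top y) h1
          have hlog : Real.log (rv m x) ≤ Real.log s := Real.log_le_log h hle
          rw [Real.negMulLog, hc]
          nlinarith
      · simp [hx]
  calc ∑' y, ENNReal.ofReal (Real.negMulLog ((m.map f) y).toReal)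
      ≤ ∑' (y : β) (x : α), if y = f x then ENNReal.ofReal (Real.negMulLog (rv m x)) else 0 :=
        ENNReal.tsum_le_tsum key
    _ = ∑' (x : α) (y : β), if y = f x then ENNReal.ofReal (Real.negMulLog (rv m x)) else 0 :=
        ENNReal.tsum_comm
    _ = ∑' x, ENNReal.ofReal (Real.negMulLog (rv m x)) := by
        congr 1; funext x; exact tsum_ite_eq (f x) _

noncomputable def pairP (μ : PMF α) (ν : PMF β) : PMF (α × β) :=
  μ.bind fun a => ν.map (Prod.mk a)

lemma pairP_apply (μ : PMF α) (ν : PMF β) (p : α × β) : pairP μ ν p = μ p.1 * ν p.2 := by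
  classical
  obtain ⟨a, b⟩ := p
  rw [pairP, PMF.bind_apply]
  have hmap : ∀ a' : α, (ν.map (Prod.mk a')) (a, b) = if a = a' then ν b else 0 := by
    intro a'
    rw [PMF.map_apply]
    by_cases ha : a = a'
    · subst ha
      rw [if_pos rfl, tsum_eq_single b]
      · simp
      · intro b' hb'
        rw [if_neg]
        simp [Ne.symm hb']
    · rw [if_neg ha, ENNReal.tsum_eq_zero]
      intro b'
      rw [if_neg]
      simp [Prod.ext_iff]
      intro h
      exact absurd h ha
  simp_rw [hmap]
  rw [tsum_eq_single a]
  · simp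
  · intro a' ha'
    rw [if_neg (Ne.symm ha'), mul_zero]

lemma entropy_pairP (μ : PMF α) (ν : PMF β) : entropy (pairP μ ν) = entropy μ + entropy ν := by
  rw [entropy,
    ENNReal.tsum_prod (f := fun a b => ENNReal.ofReal (Real.negMulLog ((pairP μ ν (a, b)).toReal)))]
  have key : ∀ (a : α) (b : β), ENNReal.ofReal (Real.negMulLog ((pairP μ ν (a, b)).toReal))
      = ENNReal.ofReal (rv ν b) * ENNReal.ofReal (Real.negMulLog (rv μ a))
        + ENNReal.ofReal (rv μ a) * ENNReal.ofReal (Real.negMulLog (rv ν b)) := by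
    intro a b
    rw [pairP_apply]
    have h1 : ((μ a * ν b).toReal) = rv μ a * rv ν b := ENNReal.toReal_mul
    have h2 : 0 ≤ rv ν b * Real.negMulLog (rv μ a) :=
      mul_nonneg (rv_nonneg ν b) (negMulLog_rv_nonneg μ a)
    have h3 : 0 ≤ rv μ a * Real.negMulLog (rv ν b) :=
      mul_nonneg (rv_nonneg μ a) (negMulLog_rv_nonneg ν b)
    rw [h1, Real.negMulLog_mul, ENNReal.ofReal_add h2 h3, ENNReal.ofReal_mul (rv_nonneg ν b),
      ENNReal.ofReal_mul (rv_nonneg μ a)]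
  have hsplit : ∀ a : α, (∑' b : β, (ENNReal.ofReal (rv ν b) * ENNReal.ofReal (Real.negMulLog (rv μ a))
      + ENNReal.ofReal (rv μ a) * ENNReal.ofReal (Real.negMulLog (rv ν b))))
      = ENNReal.ofReal (Real.negMulLog (rv μ a)) + ENNReal.ofReal (rv μ a) * entropy ν := by
    intro a
    rw [ENNReal.tsum_add, ENNReal.tsum_mul_right, ENNReal.tsum_mul_left, tsum_ofReal_rv, one_mul,
      entropy]
    rfl
  simp_rw [key, hsplit]
  rw [ENNReal.tsum_add, ENNReal.tsum_mul_right, tsum_ofReal_rv, one_mul, entropy]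
  rfl

lemma conv_eq_map_pairP {G : Type*} [Group G] (μ ν : PMF G) :
    conv μ ν = (pairP μ ν).map (fun p => p.1 * p.2) := by
  rw [conv, pairP, PMF.map_bind]
  congr 1
  funext a
  rw [PMF.map_comp]
  rfl

lemma entropy_conv_le {G : Type*} [Group G] (μ ν : PMF G) :
    entropy (conv μ ν) ≤ entropy μ + entropy ν := by
  rw [conv_eq_map_pairP]
  exact (entropy_map_le _ _).trans_eq (entropy_pairP μ ν)

end KV

namespace KV

section ConvAlg
variable {G : Type*} [Group G]

lemma conv_pure_left (ν : PMF G) : conv (PMF.pure 1) ν = ν := by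
  rw [conv, PMF.pure_bind]
  simp only [one_mul]
  exact PMF.map_id ν

lemma conv_pure_right (ν : PMF G) : conv ν (PMF.pure 1) = ν := by
  rw [conv]
  have : ∀ g : G, (PMF.pure (1 : G)).map (fun h => g * h) = PMF.pure g := by
    intro g
    rw [PMF.pure_map, mul_one]
  simp_rw [this]
  exact PMF.bind_pure ν

lemma conv_assoc (μ ν ρ : PMF G) : conv (conv μ ν) ρ = conv μ (conv ν ρ) := by
  rw [conv, conv, conv, conv, PMF.bind_bind]
  congr 1
  funext g
  rw [PMF.bind_map, PMF.map_bind]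
  congr 1
  funext h
  rw [PMF.map_comp]
  simp only [Function.comp_def, mul_assoc]

lemma conv_convPow (μ : PMF G) (n : ℕ) : conv μ (convPow μ n) = convPow μ (n + 1) := by
  induction n with
  | zero => simp [convPow, conv_pure_left, conv_pure_right]
  | succ n ih =>
    show conv μ (conv (convPow μ n) μ) = conv (convPow μ (n+1)) μ
    rw [← conv_assoc, ih]

end ConvAlg

section Master

variable {G : Type*} [Countable G]

/-- Pointwise mixture identity. -/
lemma pointwise_mixture (μ : PMF G) (ν : G → PMF G) (x : G) :
    ENNReal.ofReal (Real.negMulLog (rv (μ.bind ν) x))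
      = ∑' a, μ a * ENNReal.ofReal
          (klT (rv (ν a) x) (rv (μ.bind ν) x) + Real.negMulLog (rv (ν a) x)) := by
  classical
  set L : ℝ≥0∞ := (μ.bind ν) x with hLdef
  have hLne : L ≠ ⊤ := (μ.bind ν).apply_ne_top x
  set Lr : ℝ := L.toReal with hLr
  have hbind : L = ∑' a, μ a * ν a x := PMF.bind_apply _ _ _
  by_cases hL : L = 0
  · have hLr0 : Lr = 0 := by rw [hLr, hL]; simp
    have : ∀ a : G, μ a * ENNReal.ofReal
        (klT (rv (ν a) x) (rv (μ.bind ν) x) + Real.negMulLog (rv (ν a) x)) = 0 := by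
      intro a
      by_cases ha : μ a = 0
      · rw [ha, zero_mul]
      · have h1 : μ a * ν a x = 0 := by
          have := ENNReal.le_tsum (f := fun a => μ a * ν a x) a
          rw [← hbind, hL] at this
          exact le_antisymm this (zero_le)
        have h2 : ν a x = 0 := by
          rcases mul_eq_zero.mp h1 with h | h
          · exact absurd h ha
          · exact h
        have h3 : rv (ν a) x = 0 := by rw [rv, h2]; simp
        have h4 : rv (μ.bind ν) x = 0 := by rw [rv, ← hLdef, hL]; simp
        rw [h3, h4]
        simp [klT]
    have h4 : rv (μ.bind ν) x = 0 := by rw [rv, ← hLdef, hL]; simp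
    rw [ENNReal.tsum_eq_zero.mpr this, h4]
    simp
  · -- L ≠ 0
    have hLr_pos : 0 < Lr := ENNReal.toReal_pos hL hLne
    have hLr_le : Lr ≤ 1 := toReal_le_one ((μ.bind ν).coe_le_one x)
    set c : ℝ := - Real.log Lr with hc
    have hc0 : 0 ≤ c := by
      rw [hc, neg_nonneg]; exact Real.log_nonpos (le_of_lt hLr_pos) hLr_le
    have hlog : Real.log Lr ≤ Lr - 1 := Real.log_le_sub_one_of_pos hLr_pos
    -- the inner term as u a
    have hterm : ∀ a : G, klT (rv (ν a) x) (rv (μ.bind ν) x) + Real.negMulLog (rv (ν a) x)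
        = rv (ν a) x * c - rv (ν a) x + Lr := by
      intro a
      rw [klT_add_negMulLog]
      show rv (ν a) x * (-Real.log Lr - 1) + Lr = _
      rw [← hc]; ring
    have hu_nonneg : ∀ a : G, 0 ≤ rv (ν a) x * c - rv (ν a) x + Lr := by
      intro a
      have h1 : 0 ≤ rv (ν a) x := rv_nonneg _ _
      have h2 : rv (ν a) x ≤ 1 := rv_le_one _ _
      nlinarith [mul_nonneg h1 (by linarith : (0:ℝ) ≤ c - 1 + Lr),
        mul_nonneg (le_of_lt hLr_pos) (by linarith : (0:ℝ) ≤ 1 - rv (ν a) x)]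
    simp_rw [hterm]
    -- cancelation trick
    have hkey : ∀ a : G, μ a * ENNReal.ofReal (rv (ν a) x * c - rv (ν a) x + Lr) + μ a * ν a x
        = μ a * (ν a x * ENNReal.ofReal c) + μ a * ENNReal.ofReal Lr := by
      intro a
      have e1 : rv (ν a) x * c - rv (ν a) x + Lr + rv (ν a) x = rv (ν a) x * c + Lr := by ring
      rw [← mul_add, ← mul_add]
      congr 1
      rw [← ofReal_rv (ν a) x, ← ENNReal.ofReal_add (hu_nonneg a) (rv_nonneg _ _), e1,
        ENNReal.ofReal_add (mul_nonneg (rv_nonneg _ _) hc0) (le_of_lt hLr_pos),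
        ENNReal.ofReal_mul (rv_nonneg _ _)]
    have hsum : (∑' a, μ a * ENNReal.ofReal (rv (ν a) x * c - rv (ν a) x + Lr)) + L
        = (∑' a, (μ a * (ν a x * ENNReal.ofReal c) + μ a * ENNReal.ofReal Lr)) := by
      rw [hbind, ← ENNReal.tsum_add]
      congr 1
      funext a
      rw [hkey a]
    have hRHS : (∑' a, (μ a * (ν a x * ENNReal.ofReal c) + μ a * ENNReal.ofReal Lr))
        = ENNReal.ofReal c * L + ENNReal.ofReal Lr := by
      rw [ENNReal.tsum_add]
      congr 1
      · simp_rw [show ∀ a : G, μ a * (ν a x * ENNReal.ofReal c) = (μ a * ν a x) * ENNReal.ofReal c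
          from fun a => by ring]
        rw [ENNReal.tsum_mul_right, ← hbind, mul_comm]
      · rw [ENNReal.tsum_mul_right, μ.tsum_coe, one_mul]
    have hLrofReal : ENNReal.ofReal Lr = L := ENNReal.ofReal_toReal hLne
    have hgoal : ENNReal.ofReal (Real.negMulLog (rv (μ.bind ν) x)) + L
        = ENNReal.ofReal c * L + ENNReal.ofReal Lr := by
      have h1 : Real.negMulLog Lr = Lr * c := by rw [Real.negMulLog, hc]; ring
      show ENNReal.ofReal (Real.negMulLog Lr) + L = _
      rw [h1, ENNReal.ofReal_mul (le_of_lt hLr_pos), hLrofReal]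
      ring
    have hfinal := hsum.trans hRHS
    rw [← hgoal] at hfinal
    exact ((ENNReal.add_left_inj hLne).mp hfinal).symm

/-- Mixture inequality with KL remainder term. -/
lemma entropy_bind_ge (μ : PMF G) (ν : G → PMF G) (s : G) :
    μ s * (∑' x, ENNReal.ofReal (klT (rv (ν s) x) (rv (μ.bind ν) x)))
      + ∑' a, μ a * entropy (ν a) ≤ entropy (μ.bind ν) := by
  classical
  have h1 : entropy (μ.bind ν)
      = ∑' (a : G), ∑' (x : G), μ a * ENNReal.ofReal
          (klT (rv (ν a) x) (rv (μ.bind ν) x) + Real.negMulLog (rv (ν a) x)) := by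
    rw [entropy]
    calc ∑' x, ENNReal.ofReal (Real.negMulLog ((μ.bind ν) x).toReal)
        = ∑' (x : G), ∑' (a : G), μ a * ENNReal.ofReal
            (klT (rv (ν a) x) (rv (μ.bind ν) x) + Real.negMulLog (rv (ν a) x)) := by
          congr 1; funext x; exact pointwise_mixture μ ν x
      _ = _ := ENNReal.tsum_comm
  -- each inner sum splits when μ a ≠ 0
  have h2 : ∀ a : G, μ a ≠ 0 → (∑' (x : G), μ a * ENNReal.ofReal
        (klT (rv (ν a) x) (rv (μ.bind ν) x) + Real.negMulLog (rv (ν a) x)))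
      = μ a * ((∑' x, ENNReal.ofReal (klT (rv (ν a) x) (rv (μ.bind ν) x))) + entropy (ν a)) := by
    intro a ha
    have hk : ∀ x : G, 0 ≤ klT (rv (ν a) x) (rv (μ.bind ν) x) := by
      intro x
      refine klT_nonneg (rv_nonneg _ _) (rv_nonneg _ _) (fun h0 => ?_)
      have hb0 : (μ.bind ν) x = 0 := by
        have := ENNReal.toReal_eq_zero_iff ((μ.bind ν) x)
        rw [rv] at h0
        rcases this.mp h0 with h | h
        · exact h
        · exact absurd h ((μ.bind ν).apply_ne_top x)
      have hle : μ a * ν a x ≤ (μ.bind ν) x := by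
        rw [PMF.bind_apply]
        exact ENNReal.le_tsum a
      rw [hb0] at hle
      have : μ a * ν a x = 0 := le_antisymm hle (zero_le)
      rcases mul_eq_zero.mp this with h | h
      · exact absurd h ha
      · rw [rv, h]; simp
    rw [ENNReal.tsum_mul_left]
    congr 1
    rw [entropy, ← ENNReal.tsum_add]
    congr 1
    funext x
    exact ENNReal.ofReal_add (hk x) (negMulLog_rv_nonneg (ν a) x)
  rw [h1]
  have h3 : ∀ a : G, μ a * entropy (ν a) ≤ ∑' (x : G), μ a * ENNReal.ofReal
      (klT (rv (ν a) x) (rv (μ.bind ν) x) + Real.negMulLog (rv (ν a) x)) := by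
    intro a
    by_cases ha : μ a = 0
    · rw [ha, zero_mul]; exact zero_le
    · rw [h2 a ha]
      exact mul_le_mul_right le_add_self _
  have hTs : μ s * (∑' x, ENNReal.ofReal (klT (rv (ν s) x) (rv (μ.bind ν) x)))
      + μ s * entropy (ν s) ≤ ∑' (x : G), μ s * ENNReal.ofReal
        (klT (rv (ν s) x) (rv (μ.bind ν) x) + Real.negMulLog (rv (ν s) x)) := by
    by_cases hs : μ s = 0
    · rw [hs, zero_mul, zero_mul, zero_add]; exact zero_le
    · rw [h2 s hs, mul_add]
  rw [ENNReal.tsum_eq_add_tsum_ite (f := fun a => ∑' (x : G), μ a * ENNReal.ofReal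
        (klT (rv (ν a) x) (rv (μ.bind ν) x) + Real.negMulLog (rv (ν a) x))) s,
    ENNReal.tsum_eq_add_tsum_ite (f := fun a => μ a * entropy (ν a)) s]
  beta_reduce
  rw [← add_assoc]
  refine add_le_add hTs (ENNReal.tsum_le_tsum fun a => ?_)
  by_cases ha : a = s
  · simp [ha]
  · simp only [if_neg ha]
    exact h3 a

end Master

section Conv2

variable {G : Type*} [Group G] [Countable G]

lemma entropy_map_mulLeft (ν : PMF G) (a : G) :
    entropy (ν.map (fun h => a * h)) = entropy ν := by
  have h : (fun h => a * h) = ⇑(Equiv.mulLeft a) := by funext h; simp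
  rw [h, entropy_map_equiv]

lemma entropy_conv_ge (μ ν : PMF G) (s : G) :
    μ s * (∑' x, ENNReal.ofReal (klT (rv (ν.map (fun h => s * h)) x) (rv (conv μ ν) x)))
      + entropy ν ≤ entropy (conv μ ν) := by
  have h := entropy_bind_ge μ (fun a => ν.map (fun h => a * h)) s
  simp_rw [entropy_map_mulLeft ν] at h
  rw [ENNReal.tsum_mul_right, μ.tsum_coe, one_mul] at h
  exact h

lemma entropy_convPow_ne_top {μ : PMF G} (hfin : entropy μ ≠ ⊤) (n : ℕ) :
    entropy (convPow μ n) ≠ ⊤ := by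
  induction n with
  | zero => rw [show convPow μ 0 = PMF.pure 1 from rfl, entropy_pure]; exact ENNReal.zero_ne_top
  | succ n ih =>
    have h := entropy_conv_le (convPow μ n) μ
    exact ne_top_of_le_ne_top (ENNReal.add_ne_top.mpr ⟨ih, hfin⟩) h

lemma key_ineq (μ : PMF G) (s : G) (n : ℕ) :
    μ s * (∑' x, ENNReal.ofReal (klT (rv ((convPow μ n).map (fun h => s * h)) x)
        (rv (convPow μ (n+1)) x))) + entropy (convPow μ n) ≤ entropy (convPow μ (n+1)) := by
  have h := entropy_conv_ge μ (convPow μ n) s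
  rwa [conv_convPow] at h

lemma entropy_convPow_mono (μ : PMF G) (n : ℕ) :
    entropy (convPow μ n) ≤ entropy (convPow μ (n+1)) :=
  le_trans le_add_self (key_ineq μ 1 n)

lemma absCont (μ : PMF G) (s : G) (hs : μ s ≠ 0) (n : ℕ) (x : G)
    (h : rv (convPow μ (n+1)) x = 0) : rv ((convPow μ n).map (fun h => s * h)) x = 0 := by
  have hb0 : (convPow μ (n+1)) x = 0 := by
    rcases (ENNReal.toReal_eq_zero_iff _).mp h with h' | h'
    · exact h'
    · exact absurd h' ((convPow μ (n+1)).apply_ne_top x)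
  have hconv : conv μ (convPow μ n) = convPow μ (n+1) := conv_convPow μ n
  have hle : μ s * ((convPow μ n).map (fun h => s * h)) x ≤ (convPow μ (n+1)) x := by
    rw [← hconv]
    rw [show conv μ (convPow μ n) = μ.bind (fun a => (convPow μ n).map (fun h => a * h)) from rfl,
      PMF.bind_apply]
    exact ENNReal.le_tsum s
  rw [hb0] at hle
  have h0 : ((convPow μ n).map (fun h => s * h)) x = 0 := by
    have := le_antisymm hle (zero_le)
    rcases mul_eq_zero.mp this with h' | h'
    · exact absurd h' hs
    · exact h'
  rw [rv, h0]; simp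

end Conv2

section Pinsker

variable {G : Type*}

/-- Quantitative total-variation bound by Hellinger-type sums. -/
lemma l1_le_two_sqrt {f g k : G → ℝ} (hf0 : ∀ x, 0 ≤ f x) (hg0 : ∀ x, 0 ≤ g x)
    (hsf : Summable f) (hsg : Summable g) (htf : ∑' x, f x ≤ 1) (htg : ∑' x, g x ≤ 1)
    (hk0 : ∀ x, 0 ≤ k x) (hks : Summable k)
    (hk : ∀ x, (Real.sqrt (f x) - Real.sqrt (g x)) ^ 2 ≤ k x) :
    ∑' x, |f x - g x| ≤ 2 * Real.sqrt (∑' x, k x) := by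
  set K : ℝ := ∑' x, k x with hK
  have hK0 : 0 ≤ K := tsum_nonneg hk0
  have habs : Summable (fun x => |f x - g x|) := (hsf.sub hsg).abs
  refine Summable.tsum_le_of_sum_le habs (fun F => ?_)
  have hpt : ∀ x, |f x - g x| = |Real.sqrt (f x) - Real.sqrt (g x)| * (Real.sqrt (f x) + Real.sqrt (g x)) := by
    intro x
    have h1 : f x - g x = (Real.sqrt (f x) - Real.sqrt (g x)) * (Real.sqrt (f x) + Real.sqrt (g x)) := by
      have := Real.sq_sqrt (hf0 x)
      have := Real.sq_sqrt (hg0 x)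
      nlinarith
    rw [h1, abs_mul]
    congr 1
    exact abs_of_nonneg (by positivity)
  have hCS := Finset.sum_mul_sq_le_sq_mul_sq F
    (fun x => |Real.sqrt (f x) - Real.sqrt (g x)|) (fun x => Real.sqrt (f x) + Real.sqrt (g x))
  have h2 : ∑ x ∈ F, |Real.sqrt (f x) - Real.sqrt (g x)| ^ 2 ≤ K := by
    refine le_trans (Finset.sum_le_sum (fun x _ => ?_)) (Summable.sum_le_tsum F (fun x _ => hk0 x) hks)
    rw [sq_abs]; exact hk x
  have h3 : ∑ x ∈ F, (Real.sqrt (f x) + Real.sqrt (g x)) ^ 2 ≤ 4 := by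
    have : ∀ x, (Real.sqrt (f x) + Real.sqrt (g x)) ^ 2 ≤ 2 * (f x + g x) := by
      intro x
      have e1 := Real.sq_sqrt (hf0 x)
      have e2 := Real.sq_sqrt (hg0 x)
      nlinarith [sq_nonneg (Real.sqrt (f x) - Real.sqrt (g x))]
    refine le_trans (Finset.sum_le_sum (fun x _ => this x)) ?_
    rw [← Finset.mul_sum]
    have h4 : ∑ x ∈ F, (f x + g x) ≤ 2 := by
      rw [Finset.sum_add_distrib]
      have := Summable.sum_le_tsum F (fun x _ => hf0 x) hsf
      have := Summable.sum_le_tsum F (fun x _ => hg0 x) hsg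
      linarith
    linarith
  have hsq : (∑ x ∈ F, |f x - g x|) ^ 2 ≤ (2 * Real.sqrt K) ^ 2 := by
    have e : (2 * Real.sqrt K) ^ 2 = 4 * K := by
      rw [mul_pow, Real.sq_sqrt hK0]; ring
    rw [e]
    calc (∑ x ∈ F, |f x - g x|) ^ 2
        = (∑ x ∈ F, |Real.sqrt (f x) - Real.sqrt (g x)| * (Real.sqrt (f x) + Real.sqrt (g x))) ^ 2 := by
          congr 1; exact Finset.sum_congr rfl (fun x _ => hpt x)
      _ ≤ (∑ x ∈ F, |Real.sqrt (f x) - Real.sqrt (g x)| ^ 2) * ∑ x ∈ F, (Real.sqrt (f x) + Real.sqrt (g x)) ^ 2 := hCS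
      _ ≤ K * 4 := by
          apply mul_le_mul h2 h3 (Finset.sum_nonneg (fun x _ => by positivity)) hK0
      _ = 4 * K := by ring
  have h5 : 0 ≤ ∑ x ∈ F, |f x - g x| := Finset.sum_nonneg (fun x _ => abs_nonneg _)
  nlinarith [Real.sqrt_nonneg K]

end Pinsker

section StepBound

variable {G : Type*} [Group G] [Countable G]

lemma step_dist_bound {μ : PMF G} (hfin : entropy μ ≠ ⊤) {s : G} (hs : μ s ≠ 0) (n : ℕ) :
    ∑' x, |rv ((convPow μ n).map (fun h => s * h)) x - rv (convPow μ (n+1)) x|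
      ≤ 2 * Real.sqrt (((entropy (convPow μ (n+1))).toReal
          - (entropy (convPow μ n)).toReal) / (μ s).toReal) := by
  classical
  set ν₁ : PMF G := (convPow μ n).map (fun h => s * h) with hν₁
  set lam : PMF G := convPow μ (n+1) with hlam
  set k : G → ℝ := fun x => klT (rv ν₁ x) (rv lam x) with hk
  have hzero : ∀ x : G, rv lam x = 0 → rv ν₁ x = 0 := fun x h => absCont μ s hs n x h
  have hk0 : ∀ x, 0 ≤ k x := fun x => klT_nonneg (rv_nonneg _ _) (rv_nonneg _ _) (hzero x)
  set D : ℝ≥0∞ := ∑' x, ENNReal.ofReal (k x) with hD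
  have key := key_ineq μ s n
  have hHn1 : entropy (convPow μ (n+1)) ≠ ⊤ := entropy_convPow_ne_top hfin (n+1)
  have hHn : entropy (convPow μ n) ≠ ⊤ := entropy_convPow_ne_top hfin n
  have hmD_le : μ s * D ≤ entropy (convPow μ (n+1)) := le_trans le_self_add key
  have hmD_ne : μ s * D ≠ ⊤ := ne_top_of_le_ne_top hHn1 hmD_le
  have hDne : D ≠ ⊤ := by
    intro h
    rw [h, ENNReal.mul_top hs] at hmD_ne
    exact hmD_ne rfl
  have hks : Summable k := by
    have h1 := ENNReal.summable_toReal (by rw [← hD]; exact hDne)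
    refine h1.congr (fun x => ?_)
    exact ENNReal.toReal_ofReal (hk0 x)
  have htsumk : ∑' x, k x = D.toReal := by
    rw [hD, ENNReal.tsum_toReal_eq (fun x => ENNReal.ofReal_ne_top)]
    exact tsum_congr (fun x => (ENNReal.toReal_ofReal (hk0 x)).symm)
  set p : ℝ := (μ s).toReal with hp
  have hp_pos : 0 < p := ENNReal.toReal_pos hs (μ.apply_ne_top s)
  have hreal : p * D.toReal + (entropy (convPow μ n)).toReal
      ≤ (entropy (convPow μ (n+1))).toReal := by
    have h1 := ENNReal.toReal_mono hHn1 key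
    rw [ENNReal.toReal_add hmD_ne hHn, ENNReal.toReal_mul] at h1
    exact h1
  have hDle : D.toReal ≤ ((entropy (convPow μ (n+1))).toReal
      - (entropy (convPow μ n)).toReal) / p := by
    rw [le_div_iff₀ hp_pos]
    nlinarith
  have hmain := l1_le_two_sqrt (f := rv ν₁) (g := rv lam) (k := k)
    (rv_nonneg ν₁) (rv_nonneg lam) (summable_rv ν₁) (summable_rv lam)
    (le_of_eq (tsum_rv ν₁)) (le_of_eq (tsum_rv lam)) hk0 hks
    (fun x => sq_sqrt_sub_le_klT (rv_nonneg _ _) (rv_nonneg _ _) (hzero x))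
  refine le_trans hmain ?_
  have h2 : Real.sqrt (∑' x, k x) ≤ Real.sqrt (((entropy (convPow μ (n+1))).toReal
      - (entropy (convPow μ n)).toReal) / p) := by
    rw [htsumk]
    exact Real.sqrt_le_sqrt hDle
  linarith

end StepBound

section Meas

variable {G : Type*} [Group G] [Countable G]

/-- The mass a PMF gives to a set. -/
noncomputable def ms (ν : PMF G) (A : Set G) : ℝ := ∑' x, Set.indicator A (rv ν) x

lemma summable_ind (ν : PMF G) (A : Set G) : Summable (Set.indicator A (rv ν)) :=
  (summable_rv ν).indicator A

lemma ind_nonneg (ν : PMF G) (A : Set G) (x : G) : 0 ≤ Set.indicator A (rv ν) x :=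
  Set.indicator_nonneg (fun y _ => rv_nonneg ν y) x

lemma ms_nonneg (ν : PMF G) (A : Set G) : 0 ≤ ms ν A :=
  tsum_nonneg (ind_nonneg ν A)

lemma ms_le_one (ν : PMF G) (A : Set G) : ms ν A ≤ 1 := by
  rw [ms, ← tsum_rv ν]
  refine Summable.tsum_le_tsum (fun x => ?_) (summable_ind ν A) (summable_rv ν)
  by_cases hx : x ∈ A
  · rw [Set.indicator_of_mem hx]
  · rw [Set.indicator_of_notMem hx]; exact rv_nonneg ν x

lemma ms_univ (ν : PMF G) : ms ν Set.univ = 1 := by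
  rw [ms]
  simp only [Set.indicator_univ]
  exact tsum_rv ν

lemma ms_union (ν : PMF G) {A B : Set G} (h : Disjoint A B) :
    ms ν (A ∪ B) = ms ν A + ms ν B := by
  rw [ms, ms, ms, ← Summable.tsum_add (summable_ind ν A) (summable_ind ν B)]
  congr 1
  funext x
  rw [Set.indicator_union_of_disjoint h]

lemma abs_ms_sub_le (ν ν' : PMF G) (A : Set G) :
    |ms ν A - ms ν' A| ≤ ∑' x, |rv ν x - rv ν' x| := by
  have hsub : Summable (fun x => Set.indicator A (rv ν) x - Set.indicator A (rv ν') x) :=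
    (summable_ind ν A).sub (summable_ind ν' A)
  rw [ms, ms, ← Summable.tsum_sub (summable_ind ν A) (summable_ind ν' A)]
  have h1 : |∑' x, (Set.indicator A (rv ν) x - Set.indicator A (rv ν') x)|
      ≤ ∑' x, |Set.indicator A (rv ν) x - Set.indicator A (rv ν') x| := by
    simpa [Real.norm_eq_abs] using norm_tsum_le_tsum_norm
      (f := fun x => Set.indicator A (rv ν) x - Set.indicator A (rv ν') x)
      (by simpa [Real.norm_eq_abs] using hsub.abs)
  refine le_trans h1 (Summable.tsum_le_tsum (fun x => ?_)
    hsub.abs ((summable_rv ν).sub (summable_rv ν')).abs)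
  by_cases hx : x ∈ A
  · rw [Set.indicator_of_mem hx, Set.indicator_of_mem hx]
  · rw [Set.indicator_of_notMem hx, Set.indicator_of_notMem hx]
    simpa using abs_nonneg (rv ν x - rv ν' x)

lemma ms_map (e : G ≃ G) (ν : PMF G) (A : Set G) : ms (ν.map ⇑e) A = ms ν (⇑e ⁻¹' A) := by
  rw [ms, ms, ← Equiv.tsum_eq e (Set.indicator A (rv (ν.map ⇑e)))]
  congr 1
  funext x
  by_cases hx : e x ∈ A
  · rw [Set.indicator_of_mem hx, Set.indicator_of_mem (Set.mem_preimage.mpr hx)]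
    rw [rv, rv, map_equiv_apply]
    simp
  · rw [Set.indicator_of_notMem hx, Set.indicator_of_notMem (fun h => hx (Set.mem_preimage.mp h))]

end Meas

section Cesaro

open Filter

lemma cesaro {d a : ℕ → ℝ} {p : ℝ} (hp : 0 < p) (hd0 : ∀ n, 0 ≤ d n) (ha0 : ∀ n, 0 ≤ a n)
    (hda : ∀ n, d n ≤ 2 * Real.sqrt (a n / p))
    (hA : Tendsto (fun N : ℕ => (∑ n ∈ Finset.range N, a n) / N) atTop (nhds 0)) :
    Tendsto (fun N : ℕ => (∑ n ∈ Finset.range N, d n) / N) atTop (nhds 0) := by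
  have hS0 : ∀ N : ℕ, 0 ≤ (∑ n ∈ Finset.range N, d n) / N := fun N =>
    div_nonneg (Finset.sum_nonneg fun n _ => hd0 n) (Nat.cast_nonneg N)
  have hbound : ∀ N : ℕ, (∑ n ∈ Finset.range N, d n) / N
      ≤ Real.sqrt ((4 / p) * ((∑ n ∈ Finset.range N, a n) / N)) := by
    intro N
    rcases Nat.eq_zero_or_pos N with h | h
    · subst h; simp [Real.sqrt_nonneg]
    · have hN : (0:ℝ) < N := by exact_mod_cast h
      rw [Real.le_sqrt (hS0 N) (mul_nonneg (by positivity)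
        (div_nonneg (Finset.sum_nonneg fun n _ => ha0 n) (Nat.cast_nonneg N)))]
      have hCS := Finset.sum_mul_sq_le_sq_mul_sq (Finset.range N)
        (fun n => Real.sqrt (a n)) (fun _ => 1)
      simp only [mul_one, one_pow, Finset.sum_const, Finset.card_range, nsmul_eq_mul] at hCS
      have hsq : ∀ n, Real.sqrt (a n) ^ 2 = a n := fun n => Real.sq_sqrt (ha0 n)
      rw [show (∑ n ∈ Finset.range N, Real.sqrt (a n) ^ 2) = ∑ n ∈ Finset.range N, a n from
        Finset.sum_congr rfl (fun n _ => hsq n)] at hCS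
      have hdsum : ∑ n ∈ Finset.range N, d n
          ≤ (2 / Real.sqrt p) * ∑ n ∈ Finset.range N, Real.sqrt (a n) := by
        rw [Finset.mul_sum]
        refine Finset.sum_le_sum (fun n _ => ?_)
        have := hda n
        rw [Real.sqrt_div (ha0 n) p] at this
        calc d n ≤ 2 * (Real.sqrt (a n) / Real.sqrt p) := this
          _ = 2 / Real.sqrt p * Real.sqrt (a n) := by ring
      have hsp : 0 < Real.sqrt p := Real.sqrt_pos.mpr hp
      have hsp2 : Real.sqrt p ^ 2 = p := Real.sq_sqrt (le_of_lt hp)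
      have hsum_nonneg : 0 ≤ ∑ n ∈ Finset.range N, Real.sqrt (a n) :=
        Finset.sum_nonneg (fun n _ => Real.sqrt_nonneg _)
      have hd_nonneg : 0 ≤ ∑ n ∈ Finset.range N, d n :=
        Finset.sum_nonneg (fun n _ => hd0 n)
      rw [div_pow, div_le_iff₀ (by positivity)]
      have h2 : (∑ n ∈ Finset.range N, d n) ^ 2
          ≤ (2 / Real.sqrt p) ^ 2 * (∑ n ∈ Finset.range N, Real.sqrt (a n)) ^ 2 := by
        rw [← mul_pow]
        exact pow_le_pow_left₀ hd_nonneg hdsum 2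
      have h3 : (2 / Real.sqrt p) ^ 2 = 4 / p := by
        rw [div_pow, hsp2]; norm_num
      rw [h3] at h2
      calc (∑ n ∈ Finset.range N, d n) ^ 2
          ≤ 4 / p * ((∑ n ∈ Finset.range N, a n) * N) := by
            refine le_trans h2 ?_
            exact mul_le_mul_of_nonneg_left hCS (by positivity : (0:ℝ) ≤ 4 / p)
        _ = 4 / p * ((∑ n ∈ Finset.range N, a n) / N) * (N:ℝ)^2 := by
            field_simp
  have hup : Tendsto (fun N : ℕ => Real.sqrt ((4 / p) * ((∑ n ∈ Finset.range N, a n) / N)))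
      atTop (nhds 0) := by
    have h1 : Tendsto (fun N : ℕ => (4 / p) * ((∑ n ∈ Finset.range N, a n) / N)) atTop (nhds 0) := by
      have := hA.const_mul (4 / p)
      rwa [mul_zero] at this
    have h2 : Tendsto Real.sqrt (nhds 0) (nhds 0) := by
      have := Real.continuous_sqrt.tendsto 0
      rwa [Real.sqrt_zero] at this
    exact h2.comp h1
  exact tendsto_of_tendsto_of_tendsto_of_le_of_le tendsto_const_nhds hup hS0 hbound

end Cesaro

end KV


/-- **Entropy criterion of amenability** (Kaimanovich–Vershik). If a countable
group `G` carries a non-degenerate probability measure `μ` of finite entropy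
whose asymptotic entropy `h(G,μ) = lim H(μ^n)/n` vanishes, then `G` is
amenable. -/
theorem amenable_of_vanishing_asymptotic_entropy {G : Type*} [Group G]
    [Countable G] (μ : PMF G)
    (hnd : Subgroup.closure μ.support = ⊤)
    (hfin : entropy μ ≠ ⊤)
    (h : Filter.Tendsto (fun n : ℕ => entropy (convPow μ n) / (n : ℝ≥0∞))
      Filter.atTop (nhds 0)) :
    Amenable G := by
  classical
  set Hr : ℕ → ℝ := fun n => (entropy (convPow μ n)).toReal with hHrdef
  have hfinn : ∀ n, entropy (convPow μ n) ≠ ⊤ := KV.entropy_convPow_ne_top hfin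
  have hHr0 : Hr 0 = 0 := by
    simp only [hHrdef]
    rw [show convPow μ 0 = PMF.pure 1 from rfl, KV.entropy_pure]
    simp
  have hHrmono : ∀ n, Hr n ≤ Hr (n+1) := fun n =>
    ENNReal.toReal_mono (hfinn (n+1)) (KV.entropy_convPow_mono μ n)
  have hHtend : Tendsto (fun n : ℕ => Hr n / n) atTop (nhds 0) := by
    have h1 := (ENNReal.tendsto_toReal (a := 0) (by simp)).comp h
    refine h1.congr (fun n => ?_)
    show (entropy (convPow μ n) / (n : ℝ≥0∞)).toReal = Hr n / n
    rw [ENNReal.toReal_div, ENNReal.toReal_natCast]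
  have htel : ∀ N : ℕ, ∑ n ∈ Finset.range N, (Hr (n+1) - Hr n) = Hr N := by
    intro N
    rw [Finset.sum_range_sub Hr, hHr0, sub_zero]
  -- averaged measures
  set mavg : ℕ → Set G → ℝ :=
    fun N A => (∑ n ∈ Finset.range N, KV.ms (convPow μ (n+1)) A) / N with hmavg
  have havg_nonneg : ∀ N A, 0 ≤ mavg N A := fun N A =>
    div_nonneg (Finset.sum_nonneg fun n _ => KV.ms_nonneg _ _) (Nat.cast_nonneg N)
  have havg_le_one : ∀ N A, mavg N A ≤ 1 := by
    intro N A
    rcases Nat.eq_zero_or_pos N with h0 | h0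
    · simp [hmavg, h0]
    · have hN : (0:ℝ) < N := by exact_mod_cast h0
      rw [hmavg]
      simp only []
      rw [div_le_one hN]
      calc ∑ n ∈ Finset.range N, KV.ms (convPow μ (n+1)) A
          ≤ ∑ n ∈ Finset.range N, 1 := Finset.sum_le_sum (fun n _ => KV.ms_le_one _ _)
        _ = N := by simp
  have havg_univ : ∀ N : ℕ, 1 ≤ N → mavg N Set.univ = 1 := by
    intro N hN
    have hN' : (N:ℝ) ≠ 0 := by positivity
    rw [hmavg]
    simp only [KV.ms_univ]
    rw [Finset.sum_const, Finset.card_range, nsmul_eq_mul, mul_one, div_self hN']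
  have havg_union : ∀ (N : ℕ) (A B : Set G), Disjoint A B →
      mavg N (A ∪ B) = mavg N A + mavg N B := by
    intro N A B hAB
    rw [hmavg]
    simp only []
    rw [← add_div]
    congr 1
    rw [← Finset.sum_add_distrib]
    exact Finset.sum_congr rfl (fun n _ => KV.ms_union _ hAB)
  -- invariance property
  set P : G → Prop := fun g => ∀ A : Set G,
    Tendsto (fun N => mavg N ((g * ·) '' A) - mavg N A) atTop (nhds 0) with hPdef
  have hPgen : ∀ s ∈ μ.support, P s := by
    intro s hs
    have hs0 : μ s ≠ 0 := (PMF.mem_support_iff μ s).mp hs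
    have hp0 : 0 < (μ s).toReal := ENNReal.toReal_pos hs0 (μ.apply_ne_top s)
    set d : ℕ → ℝ := fun n => ∑' x, |KV.rv ((convPow μ n).map (fun h => s * h)) x
        - KV.rv (convPow μ (n+1)) x| with hd
    have hd0 : ∀ n, 0 ≤ d n := fun n => tsum_nonneg (fun x => abs_nonneg _)
    have hdle : ∀ n, d n ≤ 2 * Real.sqrt ((Hr (n+1) - Hr n) / (μ s).toReal) := by
      intro n
      simp only [hd, hHrdef]
      exact KV.step_dist_bound hfin hs0 n
    have hCes : Tendsto (fun N : ℕ => (∑ n ∈ Finset.range N, d n) / N) atTop (nhds 0) := by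
      refine KV.cesaro hp0 hd0 (fun n => by linarith [hHrmono n]) hdle ?_
      refine hHtend.congr (fun N => ?_)
      rw [htel N]
    intro A
    set B : Set G := (s * ·) '' A with hB
    have hterm : ∀ n : ℕ, |KV.ms (convPow μ (n+1)) B - KV.ms (convPow μ n) A| ≤ d n := by
      intro n
      have he : (fun h : G => s * h) = ⇑(Equiv.mulLeft s) := by funext x; simp
      have h1 : KV.ms ((convPow μ n).map (fun h => s * h)) B = KV.ms (convPow μ n) A := by
        rw [he, KV.ms_map]
        congr 1
        rw [show ⇑(Equiv.mulLeft s) = (fun x : G => s * x) from by funext x; simp]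
        exact Set.preimage_image_eq A (mul_right_injective s)
      rw [← h1, abs_sub_comm]
      exact KV.abs_ms_sub_le _ _ B
    have hest : ∀ N : ℕ, |mavg N B - mavg N A|
        ≤ ((∑ n ∈ Finset.range N, d n) + 1) / N := by
      intro N
      rcases Nat.eq_zero_or_pos N with h0 | h0
      · simp [hmavg, h0]
      · have hN : (0:ℝ) < N := by exact_mod_cast h0
        set z : ℕ → ℝ := fun n => KV.ms (convPow μ n) A with hz
        set x : ℕ → ℝ := fun n => KV.ms (convPow μ (n+1)) B with hx
        have hshift : ∑ n ∈ Finset.range N, z (n+1)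
            = ∑ n ∈ Finset.range N, z n + z N - z 0 := by
          have e1 := Finset.sum_range_succ' z N
          have e2 := Finset.sum_range_succ z N
          linarith
        have hnum : mavg N B - mavg N A
            = (∑ n ∈ Finset.range N, (x n - z n) - z N + z 0) / N := by
          rw [hmavg]
          simp only []
          rw [div_sub_div_same]
          congr 1
          rw [Finset.sum_sub_distrib]
          have : ∑ n ∈ Finset.range N, KV.ms (convPow μ (n+1)) A
              = ∑ n ∈ Finset.range N, z (n+1) := rfl
          rw [this, hshift]
          ring
        have habs : |∑ n ∈ Finset.range N, (x n - z n) - z N + z 0|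
            ≤ (∑ n ∈ Finset.range N, d n) + 1 := by
          have h1 : |∑ n ∈ Finset.range N, (x n - z n)| ≤ ∑ n ∈ Finset.range N, d n := by
            refine le_trans (Finset.abs_sum_le_sum_abs _ _) ?_
            exact Finset.sum_le_sum (fun n _ => hterm n)
          have h2 : |z 0 - z N| ≤ 1 := by
            have := KV.ms_nonneg (convPow μ 0) A
            have := KV.ms_le_one (convPow μ 0) A
            have := KV.ms_nonneg (convPow μ N) A
            have := KV.ms_le_one (convPow μ N) A
            rw [abs_le]
            constructor <;> simp only [hz] <;> linarith
          calc |∑ n ∈ Finset.range N, (x n - z n) - z N + z 0|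
              ≤ |∑ n ∈ Finset.range N, (x n - z n)| + |z 0 - z N| := by
                have := abs_add_le (∑ n ∈ Finset.range N, (x n - z n)) (z 0 - z N)
                have e : ∑ n ∈ Finset.range N, (x n - z n) - z N + z 0
                    = ∑ n ∈ Finset.range N, (x n - z n) + (z 0 - z N) := by ring
                rw [e]
                exact this
            _ ≤ (∑ n ∈ Finset.range N, d n) + 1 := add_le_add h1 h2
        rw [hnum, abs_div, abs_of_pos hN, div_le_div_iff_of_pos_right hN]
        exact habs
    have hub : Tendsto (fun N : ℕ => ((∑ n ∈ Finset.range N, d n) + 1) / N) atTop (nhds 0) := by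
      have h1 : Tendsto (fun N : ℕ => (1:ℝ) / N) atTop (nhds 0) :=
        tendsto_const_div_atTop_nhds_zero_nat 1
      have h2 := hCes.add h1
      rw [add_zero] at h2
      refine h2.congr (fun N => ?_)
      rw [← add_div]
    exact squeeze_zero_norm (fun N => by simpa [Real.norm_eq_abs] using hest N) hub
  -- P is closed under group operations
  have hP1 : P 1 := by
    intro A
    have h1 : (fun x : G => 1 * x) '' A = A := by simp
    simp only [h1, sub_self]
    exact tendsto_const_nhds
  have hPmul : ∀ g k : G, P g → P k → P (g * k) := by
    intro g k hg hk A
    have key : (fun x : G => (g * k) * x) '' A = (fun x : G => g * x) '' ((fun x : G => k * x) '' A) := by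
      rw [← Set.image_comp]
      congr 1
      funext x
      simp [mul_assoc]
    have h1 := (hg ((fun x : G => k * x) '' A)).add (hk A)
    rw [add_zero] at h1
    refine h1.congr (fun N => ?_)
    rw [key]
    ring
  have hPinv : ∀ g : G, P g → P g⁻¹ := by
    intro g hg A
    have key : (fun x : G => g * x) '' ((fun x : G => g⁻¹ * x) '' A) = A := by
      rw [← Set.image_comp]
      have : ((fun x : G => g * x) ∘ (fun x : G => g⁻¹ * x)) = id := by
        funext x
        simp [← mul_assoc]
      rw [this, Set.image_id]
    have h1 := (hg ((fun x : G => g⁻¹ * x) '' A)).neg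
    rw [neg_zero] at h1
    refine h1.congr (fun N => ?_)
    rw [key]
    ring
  have hPall : ∀ g : G, P g := by
    let H : Subgroup G :=
      { carrier := {g : G | P g}
        one_mem' := hP1
        mul_mem' := fun ha hb => hPmul _ _ ha hb
        inv_mem' := fun ha => hPinv _ ha }
    intro g
    have hle : Subgroup.closure μ.support ≤ H :=
      (Subgroup.closure_le H).mpr (fun s hs => hPgen s hs)
    rw [hnd] at hle
    exact hle (Subgroup.mem_top g)
  -- ultrafilter limit
  let U : Ultrafilter ℕ := Ultrafilter.of atTop
  have hU : (U : Filter ℕ) ≤ atTop := Ultrafilter.of_le _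
  have hexists : ∀ A : Set G, ∃ L : ℝ, Tendsto (fun N => mavg N A) (U : Filter ℕ) (nhds L) := by
    intro A
    have hc : (Ultrafilter.map (fun N => mavg N A) U : Filter ℝ) ≤ Filter.principal (Set.Icc (0:ℝ) 1) := by
      rw [Filter.le_principal_iff]
      refine Filter.mem_map.mpr (Filter.univ_mem' (fun N => ?_))
      exact ⟨havg_nonneg N A, havg_le_one N A⟩
    obtain ⟨L, _, hL⟩ := isCompact_Icc.ultrafilter_le_nhds
      (Ultrafilter.map (fun N => mavg N A) U) hc
    exact ⟨L, hL⟩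
  choose lim hlim using hexists
  refine ⟨lim, ?_, ?_, ?_, ?_⟩
  · have h1 : Tendsto (fun N => mavg N Set.univ) (U : Filter ℕ) (nhds 1) := by
      refine Filter.Tendsto.congr' ?_ (tendsto_const_nhds : Tendsto (fun _ : ℕ => (1:ℝ)) (U : Filter ℕ) (nhds 1))
      have h2 : ∀ᶠ N in atTop, (1:ℝ) = mavg N Set.univ := by
        filter_upwards [eventually_ge_atTop 1] with N hN
        exact (havg_univ N hN).symm
      exact h2.filter_mono hU
    exact tendsto_nhds_unique (hlim Set.univ) h1
  · intro A
    exact ge_of_tendsto (hlim A) (Filter.Eventually.of_forall (fun N => havg_nonneg N A))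
  · intro A B hAB
    have h1 : Tendsto (fun N => mavg N (A ∪ B)) (U : Filter ℕ) (nhds (lim A + lim B)) := by
      refine ((hlim A).add (hlim B)).congr (fun N => ?_)
      exact (havg_union N A B hAB).symm
    exact tendsto_nhds_unique (hlim (A ∪ B)) h1
  · intro g A
    have h3 := hPall g A
    have h4 : Tendsto (fun N => mavg N ((g * ·) '' A) - mavg N A) (U : Filter ℕ) (nhds 0) :=
      h3.mono_left hU
    have h5 : Tendsto (fun N => mavg N ((g * ·) '' A)) (U : Filter ℕ) (nhds (0 + lim A)) := by
      refine (h4.add (hlim A)).congr (fun N => ?_)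
      ring
    rw [zero_add] at h5
    exact tendsto_nhds_unique (hlim ((g * ·) '' A)) h5
end

section
/- An automatic automorphism α of the rooted tree T(X) is bounded if and only if either α is finitary, or there exists an integer m ≥ 0 such that every non-finitary state α_w with w ∈ X^m is directed. -/
open List

/-! ### The automorphism group of the rooted tree `T(X)` -/

/-- A permutation of the vertex set `X*` of the rooted tree `T(X)` is a tree
automorphism iff it preserves the length of words and the prefix relation. -/
def IsTreeAut {X : Type*} (f : Equiv.Perm (List X)) : Prop :=
  (∀ w : List X, (f w).length = w.length) ∧
    ∀ u v : List X, u <+: v → f u <+: f v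

/-- The automorphism group `Aut(T(X))` of the rooted tree `T(X)`, realized as a
subgroup of the permutation group of the vertex set `X*`. -/
def treeAut (X : Type*) : Subgroup (Equiv.Perm (List X)) where
  carrier := {f | IsTreeAut f}
  one_mem' := ⟨fun _ => rfl, fun _ _ h => h⟩
  mul_mem' := by
    rintro f g ⟨hf1, hf2⟩ ⟨hg1, hg2⟩
    refine ⟨fun w => ?_, fun u v h => ?_⟩
    · simp only [Equiv.Perm.coe_mul, Function.comp_apply]
      rw [hf1, hg1]
    · simpa using hf2 _ _ (hg2 _ _ h)
  inv_mem' := by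
    rintro f ⟨hf1, hf2⟩
    have hlen : ∀ w : List X, (f⁻¹ w).length = w.length := by
      intro w
      have h := hf1 (f⁻¹ w)
      rw [(Equiv.Perm.eq_inv_iff_eq.mp rfl : f (f⁻¹ _) = _)] at h
      exact h.symm
    refine ⟨hlen, fun u v h => ?_⟩
    set t := (f⁻¹ v).take (f⁻¹ u).length with ht
    have htp : t <+: f⁻¹ v := take_prefix _ _
    have h2 : f t <+: v := by
      have := hf2 _ _ htp
      rwa [(Equiv.Perm.eq_inv_iff_eq.mp rfl : f (f⁻¹ _) = _)] at this
    have hlt : (f t).length = u.length := by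
      rw [hf1, ht, length_take, hlen, hlen]
      exact min_eq_left h.length_le
    have hfu : f t = u :=
      (prefix_of_prefix_length_le h2 h hlt.le).eq_of_length hlt
    have : t = f⁻¹ u := by
      rw [← hfu, (Equiv.Perm.inv_eq_iff_eq.mpr rfl : f⁻¹ (f _) = _)]
    rwa [this] at htp

lemma mem_treeAut {X : Type*} {f : Equiv.Perm (List X)} :
    f ∈ treeAut X ↔ IsTreeAut f := Iff.rfl

/-! ### States, automatic and bounded automorphisms -/

/-- The state (section/restriction) of `f` at the vertex `w` of the tree:
`f (w ++ v) = f w ++ state f w v` for a tree automorphism `f`. -/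
def state {X : Type*} (f : List X → List X) (w : List X) : List X → List X :=
  fun v => (f (w ++ v)).drop w.length

/-- An endomorphism of `X*` is automatic if it has only finitely many states. -/
def IsAutomatic {X : Type*} (f : List X → List X) : Prop :=
  (Set.range fun w : List X => state f w).Finite

/-- An endomorphism of `X*` is bounded if the number of words of length `n`
with non-trivial state is bounded uniformly in `n`. -/
def IsBounded {X : Type*} (f : List X → List X) : Prop :=
  ∃ C : ℕ, ∀ n : ℕ,
    {w : List X | w.length = n ∧ state f w ≠ id}.ncard ≤ C

lemma IsTreeAut.apply_append {X : Type*} {f : Equiv.Perm (List X)}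
    (hf : IsTreeAut f) (w v : List X) :
    f (w ++ v) = f w ++ state (⇑f) w v := by
  obtain ⟨t, ht⟩ := hf.2 w (w ++ v) (prefix_append w v)
  have hl : (f w).length = w.length := hf.1 w
  have hst : state (⇑f) w v = t := by
    unfold state
    rw [← ht, ← hl, List.drop_left]
  rw [hst, ht]

lemma state_one {X : Type*} (w : List X) :
    state (⇑(1 : Equiv.Perm (List X))) w = id := by
  funext v
  simp [state]

lemma state_mul {X : Type*} {f g : Equiv.Perm (List X)}
    (hf : IsTreeAut f) (hg : IsTreeAut g) (w : List X) :
    state (⇑(f * g)) w = state (⇑f) (g w) ∘ state (⇑g) w := by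
  funext v
  have h1 : (⇑(f * g)) (w ++ v) = f (g (w ++ v)) := rfl
  show ((f * g) (w ++ v)).drop w.length = _
  rw [h1, hg.apply_append, hf.apply_append]
  have hl : (f (g w)).length = w.length := by rw [hf.1, hg.1]
  rw [← hl, List.drop_left]
  rfl

lemma state_inv_comp {X : Type*} {f : Equiv.Perm (List X)}
    (hf : IsTreeAut f) (hfi : IsTreeAut f⁻¹) (u : List X) :
    state (⇑f⁻¹) u ∘ state (⇑f) (f⁻¹ u) = id ∧
      state (⇑f) (f⁻¹ u) ∘ state (⇑f⁻¹) u = id := by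
  constructor
  · funext v
    have h1 : f (f⁻¹ u ++ v) = u ++ state (⇑f) (f⁻¹ u) v := by
      rw [hf.apply_append, (Equiv.Perm.eq_inv_iff_eq.mp rfl : f (f⁻¹ _) = _)]
    have h2 : f⁻¹ (u ++ state (⇑f) (f⁻¹ u) v)
        = f⁻¹ u ++ state (⇑f⁻¹) u (state (⇑f) (f⁻¹ u) v) := hfi.apply_append _ _
    rw [← h1, (Equiv.Perm.inv_eq_iff_eq.mpr rfl : f⁻¹ (f _) = _)] at h2
    simp only [Function.comp_apply, id_eq]
    exact (List.append_cancel_left h2).symm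
  · funext v
    have h1 : f⁻¹ (u ++ v) = f⁻¹ u ++ state (⇑f⁻¹) u v := hfi.apply_append _ _
    have h2 : f (f⁻¹ u ++ state (⇑f⁻¹) u v)
        = f (f⁻¹ u) ++ state (⇑f) (f⁻¹ u) (state (⇑f⁻¹) u v) := hf.apply_append _ _
    rw [← h1, (Equiv.Perm.eq_inv_iff_eq.mp rfl : f (f⁻¹ _) = _), (Equiv.Perm.eq_inv_iff_eq.mp rfl : f (f⁻¹ _) = _)] at h2
    simp only [Function.comp_apply, id_eq]
    exact (List.append_cancel_left h2).symm

/-- An endomorphism of `X*` is finitary if all its states at sufficiently deep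
levels are trivial. -/
def IsFinitary {X : Type*} (f : List X → List X) : Prop :=
  ∃ n₀ : ℕ, ∀ w : List X, n₀ ≤ w.length → state f w = id

/-- An endomorphism of `X*` is directed if for some `l ≥ 1` there is a word
`w₀` of length `l` with state equal to the endomorphism itself, all the other
states at level `l` being finitary. -/
def IsDirectedAut {X : Type*} (f : List X → List X) : Prop :=
  ∃ l : ℕ, 1 ≤ l ∧ ∃ w₀ : List X, w₀.length = l ∧ state f w₀ = f ∧
    ∀ w : List X, w.length = l → w ≠ w₀ → IsFinitary (state f w)


/-! ### Auxiliary lemmas -/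

section Aux

variable {X : Type*}

lemma state_append (f : List X → List X) (w v : List X) :
    state f (w ++ v) = state (state f w) v := by
  funext u
  simp only [state, List.append_assoc, List.drop_drop, List.length_append]

lemma state_id (w : List X) : state (id : List X → List X) w = id := by
  funext v; simp [state]

lemma isFinitary_of_eq_id {f : List X → List X} (h : f = id) : IsFinitary f :=
  ⟨0, fun w _ => by rw [h, state_id]⟩

lemma IsFinitary.state {f : List X → List X} (hf : IsFinitary f) (w : List X) :
    IsFinitary (state f w) := by
  obtain ⟨n₀, h⟩ := hf
  refine ⟨n₀, fun v hv => ?_⟩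
  rw [← state_append]
  exact h _ (le_trans hv (by simp))

lemma not_finitary_prefix {f : List X → List X} {w v : List X}
    (h : ¬ IsFinitary (state f (w ++ v))) : ¬ IsFinitary (state f w) := fun hf =>
  h (by rw [state_append]; exact hf.state v)

/-- A uniform bound over a finite set. -/
lemma exists_uniform_nat {ι : Type*} {s : Set ι} (hs : s.Finite) {Q : ι → ℕ → Prop}
    (hQ : ∀ i n n', Q i n → n ≤ n' → Q i n') (h : ∀ i ∈ s, ∃ n, Q i n) :
    ∃ N, ∀ i ∈ s, Q i N := by
  classical
  set g : ι → ℕ := fun i => if h' : ∃ n, Q i n then h'.choose else 0 with hg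
  obtain ⟨N, hN⟩ := (hs.image g).bddAbove
  refine ⟨N, fun i hi => ?_⟩
  obtain ⟨n, hn⟩ := h i hi
  have h' : ∃ n, Q i n := ⟨n, hn⟩
  have hQg : Q i (g i) := by
    simp only [hg, dif_pos h']
    exact h'.choose_spec
  exact hQ i _ _ hQg (hN (Set.mem_image_of_mem g hi))

lemma isFinitary_of_states_finitary [Finite X] {f : List X → List X} {n : ℕ}
    (h : ∀ w : List X, w.length = n → IsFinitary (state f w)) : IsFinitary f := by
  obtain ⟨N, hN⟩ := exists_uniform_nat (List.finite_length_eq X n)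
    (Q := fun w k => ∀ v : List X, k ≤ v.length → state (state f w) v = id)
    (fun w a b ha hab v hv => ha v (le_trans hab hv))
    (fun w hw => h w hw)
  refine ⟨n + N, fun u hu => ?_⟩
  have h1 : u.take n ++ u.drop n = u := List.take_append_drop n u
  have h2 : (u.take n).length = n := by
    rw [List.length_take]; omega
  calc state f u = state f (u.take n ++ u.drop n) := by rw [h1]
    _ = state (state f (u.take n)) (u.drop n) := state_append f _ _
    _ = id := hN _ h2 _ (by rw [List.length_drop]; omega)

lemma exists_state_ne_id_of_not_finitary {f : List X → List X} (hf : ¬ IsFinitary f) (N : ℕ) :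
    ∃ v : List X, v.length = N ∧ state f v ≠ id := by
  by_contra h
  push_neg at h
  apply hf
  refine ⟨N, fun u hu => ?_⟩
  have h1 : u.take N ++ u.drop N = u := List.take_append_drop N u
  have h2 : (u.take N).length = N := by rw [List.length_take]; omega
  rcases eq_or_ne (state f (u.take N)) id with h3 | h3
  · calc state f u = state (state f (u.take N)) (u.drop N) := by rw [← h1, state_append, h1]
      _ = state id (u.drop N) := by rw [h3]
      _ = id := state_id _
  · exact absurd (h _ h2) h3

lemma exists_child_not_finitary [Finite X] {f : List X → List X} (hf : ¬ IsFinitary f) :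
    ∃ x : X, ¬ IsFinitary (state f [x]) := by
  by_contra h
  push_neg at h
  apply hf
  apply isFinitary_of_states_finitary (n := 1)
  intro w hw
  match w, hw with
  | [x], _ => exact h x

lemma IsBounded.state [Finite X] {f : List X → List X} (hf : IsBounded f) (w : List X) :
    IsBounded (state f w) := by
  obtain ⟨C, hC⟩ := hf
  refine ⟨C, fun n => ?_⟩
  refine le_trans (Set.ncard_le_ncard_of_injOn (fun v => w ++ v) ?_ ?_ ?_) (hC (w.length + n))
  · rintro v ⟨hv1, hv2⟩
    refine ⟨by simp [hv1], ?_⟩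
    rw [state_append]
    exact hv2
  · intro a _ b _ hab
    exact List.append_cancel_left hab
  · exact (List.finite_length_eq X _).subset fun u hu => hu.1

lemma IsAutomatic.state {f : List X → List X} (hf : IsAutomatic f) (w : List X) :
    IsAutomatic (state f w) := by
  apply hf.subset
  rintro _ ⟨v, rfl⟩
  exact ⟨w ++ v, state_append f w v⟩

lemma IsFinitary.isBounded [Finite X] {f : List X → List X} (hf : IsFinitary f) :
    IsBounded f := by
  obtain ⟨n₀, h⟩ := hf
  refine ⟨({u : List X | u.length ≤ n₀}).ncard, fun n => ?_⟩
  rcases le_or_gt n₀ n with hn | hn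
  · have he : {w : List X | w.length = n ∧ _root_.state f w ≠ id} = ∅ := by
      ext w
      simp only [Set.mem_setOf_eq, Set.mem_empty_iff_false, iff_false, not_and, not_not]
      intro hw
      exact h w (hw ▸ hn)
    simp [he]
  · exact Set.ncard_le_ncard (fun w hw => le_of_lt (hw.1 ▸ hn)) (List.finite_length_le X n₀)

end Aux

section Backward

variable {X : Type*}

lemma finset_ncard_biUnion_le_of_le {ι κ : Type*} (K : Finset ι) (F : ι → Set κ) (C : ℕ)
    (hF' : ∀ i ∈ K, (F i).Finite) (hC' : ∀ i ∈ K, (F i).ncard ≤ C) :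
    (⋃ i ∈ K, F i).ncard ≤ K.card * C := by
  classical
  induction K using Finset.induction_on with
  | empty => simp
  | @insert a K' haK ih =>
    have h1 : ⋃ i ∈ insert a K', F i = F a ∪ ⋃ i ∈ K', F i := by
      simp [Set.biUnion_insert]
    rw [h1, Finset.card_insert_of_notMem haK, Nat.add_mul, Nat.one_mul,
      Nat.add_comm (K'.card * C)]
    refine le_trans (Set.ncard_union_le _ _) ?_
    exact Nat.add_le_add (hC' a (Finset.mem_insert_self a K'))
      (ih (fun i hi => hF' i (Finset.mem_insert_of_mem hi))
        (fun i hi => hC' i (Finset.mem_insert_of_mem hi)))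

lemma ncard_biUnion_le_of_le {ι κ : Type*} {K : Set ι} (hK : K.Finite) (F : ι → Set κ) (C : ℕ)
    (hF' : ∀ i ∈ K, (F i).Finite) (hC' : ∀ i ∈ K, (F i).ncard ≤ C) :
    (⋃ i ∈ K, F i).ncard ≤ K.ncard * C := by
  have h1 : ⋃ i ∈ K, F i = ⋃ i ∈ hK.toFinset, F i := by
    ext x
    simp [hK.mem_toFinset]
  rw [h1, Set.ncard_eq_toFinset_card K hK]
  exact finset_ncard_biUnion_le_of_le hK.toFinset F C
    (fun i hi => hF' i (hK.mem_toFinset.mp hi)) (fun i hi => hC' i (hK.mem_toFinset.mp hi))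

lemma isBounded_of_states_bounded [Finite X] {f : List X → List X} {m : ℕ}
    (h : ∀ w : List X, w.length = m → IsBounded (state f w)) : IsBounded f := by
  obtain ⟨C, hC⟩ := exists_uniform_nat (List.finite_length_eq X m)
    (Q := fun w Cw => ∀ n, {v : List X | v.length = n ∧ state (state f w) v ≠ id}.ncard ≤ Cw)
    (fun w a b ha hab n => le_trans (ha n) hab)
    (fun w hw => h w hw)
  refine ⟨{u : List X | u.length ≤ m}.ncard + {w : List X | w.length = m}.ncard * C, fun n => ?_⟩
  rcases lt_or_ge n m with hn | hn
  · exact le_trans (Set.ncard_le_ncard (fun u hu => le_of_lt (hu.1 ▸ hn))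
      (List.finite_length_le X m)) (Nat.le_add_right _ _)
  · refine le_trans ?_ (Nat.le_add_left _ _)
    have hFfin : ∀ w : List X, w ∈ {w : List X | w.length = m} →
        ((fun v => w ++ v) '' {v : List X | v.length = n - m ∧ state (state f w) v ≠ id}).Finite :=
      fun w _ => ((List.finite_length_eq X (n - m)).subset fun v hv => hv.1).image _
    have hsub : {u : List X | u.length = n ∧ state f u ≠ id} ⊆
        ⋃ w ∈ {w : List X | w.length = m},
          (fun v => w ++ v) '' {v : List X | v.length = n - m ∧ state (state f w) v ≠ id} := by
      rintro u ⟨hu1, hu2⟩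
      have htk : (u.take m).length = m := by rw [List.length_take]; omega
      refine Set.mem_biUnion htk ⟨u.drop m, ⟨by rw [List.length_drop]; omega, ?_⟩,
        List.take_append_drop m u⟩
      rw [← state_append, List.take_append_drop]
      exact hu2
    refine le_trans (Set.ncard_le_ncard hsub
      ((List.finite_length_eq X m).biUnion hFfin)) ?_
    refine ncard_biUnion_le_of_le (List.finite_length_eq X m) _ C hFfin ?_
    intro w hw
    exact le_trans (Set.ncard_image_le
      ((List.finite_length_eq X (n - m)).subset fun v hv => hv.1)) (hC w hw (n - m))

lemma IsDirectedAut.isBounded [Finite X] {f : List X → List X} (hf : IsDirectedAut f) :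
    IsBounded f := by
  obtain ⟨l, hl, w₀, hw₀l, hw₀s, hoff⟩ := hf
  obtain ⟨N, hN⟩ := exists_uniform_nat (List.finite_length_eq X l)
    (Q := fun w k => w ≠ w₀ → ∀ v : List X, k ≤ v.length → _root_.state (_root_.state f w) v = id)
    (fun w a b ha hab hne v hv => ha hne v (le_trans hab hv))
    (fun w hw => by
      by_cases hne : w = w₀
      · exact ⟨0, fun h => absurd hne h⟩
      · obtain ⟨k, hk⟩ := hoff w hw hne
        exact ⟨k, fun _ v hv => hk v hv⟩)
  refine ⟨({u : List X | u.length ≤ l + N}).ncard, fun n => ?_⟩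
  induction n using Nat.strong_induction_on with
  | _ n ih =>
    rcases le_or_gt n (l + N) with hn | hn
    · exact Set.ncard_le_ncard (fun u hu => le_trans (le_of_eq hu.1) hn) (List.finite_length_le X (l + N))
    · have key : ∀ u ∈ {u : List X | u.length = n ∧ _root_.state f u ≠ id},
          u = w₀ ++ u.drop l ∧ (u.drop l).length = n - l ∧ _root_.state f (u.drop l) ≠ id := by
        rintro u ⟨hu1, hu2⟩
        have htk : (u.take l).length = l := by rw [List.length_take]; omega
        have hsplit : _root_.state f u = _root_.state (_root_.state f (u.take l)) (u.drop l) := by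
          rw [← state_append, List.take_append_drop]
        have hdl : (u.drop l).length = n - l := by rw [List.length_drop]; omega
        have htkeq : u.take l = w₀ := by
          by_contra hne
          exact hu2 (hsplit.trans (hN _ htk hne _ (by omega)))
        have hu' : u = w₀ ++ u.drop l := by rw [← htkeq, List.take_append_drop]
        refine ⟨hu', hdl, ?_⟩
        rw [← hw₀s, ← state_append, ← htkeq, List.take_append_drop]
        exact hu2
      refine le_trans (Set.ncard_le_ncard_of_injOn (fun u => u.drop l) ?_ ?_ ?_)
        (ih (n - l) (by omega))
      · intro u hu
        exact ⟨(key u hu).2.1, (key u hu).2.2⟩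
      · intro a ha b hb hab
        rw [(key a ha).1, (key b hb).1]
        exact congrArg (w₀ ++ ·) hab
      · exact (List.finite_length_eq X (n - l)).subset fun u hu => hu.1

end Backward

section Forward

variable {X : Type*}

lemma directed_states_of_bounded [Finite X] {f : List X → List X}
    (haut : IsAutomatic f) (hb : IsBounded f) :
    ∃ m : ℕ, ∀ w : List X, w.length = m →
      ¬ IsFinitary (state f w) → IsDirectedAut (state f w) := by
  classical
  set A : ℕ → Set (List X) := fun n => {w | w.length = n ∧ ¬ IsFinitary (state f w)} with hA
  have hAfin : ∀ n, (A n).Finite := fun n => (List.finite_length_eq X n).subset fun w hw => hw.1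
  -- the one-step extension map
  set e : List X → List X :=
    fun u => if h : ∃ x : X, ¬ IsFinitary (state f (u ++ [x])) then u ++ [h.choose] else u with he
  have hestep : ∀ u : List X, ¬ IsFinitary (state f u) →
      ∃ x : X, e u = u ++ [x] ∧ ¬ IsFinitary (state f (e u)) := by
    intro u hu
    have hx : ∃ x : X, ¬ IsFinitary (state f (u ++ [x])) := by
      obtain ⟨x, hx⟩ := exists_child_not_finitary hu
      refine ⟨x, ?_⟩
      rw [state_append]
      exact hx
    refine ⟨hx.choose, ?_, ?_⟩
    · simp only [he, dif_pos hx]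
    · simp only [he, dif_pos hx]
      exact hx.choose_spec
  -- prefixes of words with non-finitary state have non-finitary state
  have hpre : ∀ n, ∀ u ∈ A (n+1), u.take n ∈ A n := by
    intro n u hu
    have h2 := hu.2
    rw [← List.take_append_drop n u] at h2
    have h1 := hu.1
    exact ⟨by rw [List.length_take]; omega, not_finitary_prefix h2⟩
  -- iterating the extension map
  have hiter : ∀ u : List X, ¬ IsFinitary (state f u) → ∀ n : ℕ,
      (e^[n] u).length = u.length + n ∧ ¬ IsFinitary (state f (e^[n] u)) ∧ u <+: e^[n] u := by
    intro u hu n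
    induction n with
    | zero => exact ⟨by simp, hu, List.prefix_refl u⟩
    | succ n ih =>
      obtain ⟨x, hx1, hx2⟩ := hestep _ ih.2.1
      have hs : e^[n+1] u = e (e^[n] u) := Function.iterate_succ_apply' e n u
      refine ⟨?_, by rw [hs]; exact hx2, ?_⟩
      · rw [hs, hx1, List.length_append, ih.1]
        simp [Nat.add_assoc]
      · rw [hs, hx1]
        exact ih.2.2.trans ⟨[x], rfl⟩
  -- cardinalities are monotone
  have hmono : ∀ n, (A n).ncard ≤ (A (n+1)).ncard := by
    intro n
    refine Set.ncard_le_ncard_of_injOn e (fun u hu => ?_) (fun u hu u' hu' huu => ?_) (hAfin _)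
    · obtain ⟨x, hx1, hx2⟩ := hestep u hu.2
      exact ⟨by rw [hx1, List.length_append, hu.1]; simp, hx2⟩
    · obtain ⟨x, hx1, _⟩ := hestep u hu.2
      obtain ⟨y, hy1, _⟩ := hestep u' hu'.2
      rw [hx1, hy1] at huu
      exact (List.append_inj' huu rfl).1
  have hgm : Monotone fun n => (A n).ncard := monotone_nat_of_le_succ hmono
  -- cardinalities are bounded, hence eventually constant
  obtain ⟨m₀, hm₀⟩ : ∃ m₀, ∀ n, (A n).ncard ≤ (A m₀).ncard := by
    obtain ⟨C, hC⟩ := hb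
    have hbd : ∀ n, (A n).ncard ≤ C := by
      intro n
      refine le_trans (Set.ncard_le_ncard ?_ ((List.finite_length_eq X n).subset
        fun w hw => hw.1)) (hC n)
      rintro w ⟨hw1, hw2⟩
      exact ⟨hw1, fun h => hw2 (isFinitary_of_eq_id h)⟩
    have hne : (Set.range fun n => (A n).ncard).Nonempty := ⟨_, ⟨0, rfl⟩⟩
    have hbdd' : BddAbove (Set.range fun n => (A n).ncard) := by
      refine ⟨C, ?_⟩
      rintro _ ⟨n, rfl⟩
      exact hbd n
    obtain ⟨m₀, hm₀⟩ := Nat.sSup_mem hne hbdd'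
    refine ⟨m₀, fun n => ?_⟩
    have h1 : (A m₀).ncard = sSup (Set.range fun n => (A n).ncard) := hm₀
    rw [h1]
    exact le_csSup hbdd' ⟨n, rfl⟩
  have hcard : ∀ n, m₀ ≤ n → (A n).ncard = (A m₀).ncard :=
    fun n hn => le_antisymm (hm₀ n) (hgm hn)
  -- one-step uniqueness of non-finitary extensions beyond level m₀
  have huniq1 : ∀ n, m₀ ≤ n → ∀ u₁ ∈ A (n+1), ∀ u₂ ∈ A (n+1),
      u₁.take n = u₂.take n → u₁ = u₂ := by
    intro n hn u₁ hu₁ u₂ hu₂ heq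
    have hsurj : ∀ w ∈ A n, ∃ u, ∃ _ : u ∈ A (n+1), u.take n = w := by
      intro w hw
      obtain ⟨x, hx1, hx2⟩ := hestep w hw.2
      refine ⟨e w, ⟨by rw [hx1, List.length_append, hw.1]; simp, hx2⟩, ?_⟩
      rw [hx1, List.take_left' hw.1]
    exact Set.inj_on_of_surj_on_of_ncard_le (s := A (n+1)) (t := A n) (fun u _ => u.take n)
      (fun u hu => hpre n u hu) hsurj
      (le_of_eq ((hcard (n+1) (by omega)).trans (hcard n hn).symm))
      hu₁ hu₂ heq (hAfin _)
  -- multi-step uniqueness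
  have hU : ∀ t : ℕ, ∀ u₁ ∈ A (m₀ + t), ∀ u₂ ∈ A (m₀ + t),
      u₁.take m₀ = u₂.take m₀ → u₁ = u₂ := by
    intro t
    induction t with
    | zero =>
      intro u₁ hu₁ u₂ hu₂ h
      rw [← List.take_of_length_le (le_of_eq hu₁.1), ← List.take_of_length_le (le_of_eq hu₂.1)]
      exact h
    | succ t ih =>
      intro u₁ hu₁ u₂ hu₂ h
      have h1 := hpre (m₀ + t) u₁ hu₁
      have h2 := hpre (m₀ + t) u₂ hu₂
      have heq : u₁.take (m₀ + t) = u₂.take (m₀ + t) := by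
        refine ih _ h1 _ h2 ?_
        rw [List.take_take, List.take_take, Nat.min_def, if_pos (Nat.le_add_right m₀ t)]
        exact h
      exact huniq1 (m₀ + t) (Nat.le_add_right _ _) u₁ hu₁ u₂ hu₂ heq
  -- on each ray, states at deep enough levels are directed
  have hkey : ∀ w ∈ A m₀, ∃ i : ℕ, ∀ q, i ≤ q → IsDirectedAut (state f (e^[q] w)) := by
    intro w hw
    have hrA : ∀ n, e^[n] w ∈ A (m₀ + n) := by
      intro n
      obtain ⟨h1, h2, _⟩ := hiter w hw.2 n
      exact ⟨by rw [h1, hw.1], h2⟩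
    have hrpre : ∀ a b : ℕ, a ≤ b → e^[a] w <+: e^[b] w := by
      intro a b hab
      have hb' : b - a + a = b := by omega
      have h1 : e^[b] w = e^[b-a] (e^[a] w) := by
        rw [← Function.iterate_add_apply, hb']
      rw [h1]
      exact (hiter _ (hrA a).2 (b - a)).2.2
    -- pigeonhole on the states along the ray
    obtain ⟨i, j, hij, hsij⟩ : ∃ i j : ℕ, i < j ∧ state f (e^[i] w) = state f (e^[j] w) := by
      have hfinS : Finite ↥(Set.range fun u : List X => state f u) := haut.to_subtype
      obtain ⟨i, j, hne, hmap⟩ := Finite.exists_ne_map_eq_of_infinite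
        (fun n : ℕ => (⟨state f (e^[n] w), Set.mem_range_self _⟩ :
          ↥(Set.range fun u : List X => state f u)))
      have h' : state f (e^[i] w) = state f (e^[j] w) := congrArg Subtype.val hmap
      rcases hne.lt_or_gt with h1 | h1
      exacts [⟨i, j, h1, h'⟩, ⟨j, i, h1, h'.symm⟩]
    set p := j - i with hp
    have hp1 : 1 ≤ p := by omega
    have hip : i + p = j := by omega
    -- periodicity of states along the ray
    have hper : ∀ q, i ≤ q → state f (e^[q+p] w) = state f (e^[q] w) := by
      intro q hq
      induction q, hq using Nat.le_induction with
      | base => rw [hip]; exact hsij.symm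
      | succ q hq ih =>
        obtain ⟨x, hx1, hx2⟩ := hestep _ (hrA q).2
        obtain ⟨y, hy1, hy2⟩ := hestep _ (hrA (q+p)).2
        have hrq1 : e^[q+1] w = e^[q] w ++ [x] := by
          rw [Function.iterate_succ_apply' e q w, hx1]
        have hrqp1 : e^[q+p+1] w = e^[q+p] w ++ [y] := by
          rw [Function.iterate_succ_apply' e (q+p) w, hy1]
        have hxy : x = y := by
          have h1 : e^[q] w ++ [y] ∈ A (m₀ + q + 1) := by
            refine ⟨by rw [List.length_append, (hrA q).1]; simp, ?_⟩
            rw [state_append, ← ih, ← state_append]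
            rw [hy1] at hy2
            exact hy2
          have h2 : e^[q] w ++ [x] ∈ A (m₀ + q + 1) := by
            refine ⟨by rw [List.length_append, (hrA q).1]; simp, ?_⟩
            rw [← hx1]
            exact hx2
          have htk : (e^[q] w ++ [x]).take (m₀ + q) = (e^[q] w ++ [y]).take (m₀ + q) := by
            rw [List.take_left' (hrA q).1, List.take_left' (hrA q).1]
          have := huniq1 (m₀ + q) (Nat.le_add_right _ _) _ h2 _ h1 htk
          have h3 : [x] = [y] := (List.append_inj' this rfl).2
          simpa using h3
        have hidx : q + 1 + p = q + p + 1 := by omega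
        rw [hidx, hrqp1, hrq1, state_append, state_append, ih, hxy]
    -- all states from index i on are directed
    refine ⟨i, fun q hq => ?_⟩
    obtain ⟨t, ht⟩ := hrpre q (q+p) (Nat.le_add_right _ _)
    have hdrop : (e^[q+p] w).drop (e^[q] w).length = t := by rw [← ht, List.drop_left]
    refine ⟨p, hp1, t, ?_, ?_, ?_⟩
    · have := congrArg List.length ht
      rw [List.length_append, (hrA (q+p)).1, (hrA q).1] at this
      omega
    · rw [← state_append, ht]
      exact hper q hq
    · intro v hv hvne
      by_contra hfin
      have hlq : (e^[q] w).length = m₀ + q := (hrA q).1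
      have h1 : e^[q] w ++ v ∈ A (m₀ + (q + p)) := by
        refine ⟨by rw [List.length_append, hlq, hv]; omega, ?_⟩
        rw [state_append]
        exact hfin
      have h2 : e^[q+p] w ∈ A (m₀ + (q + p)) := hrA _
      have htk : (e^[q] w ++ v).take m₀ = (e^[q+p] w).take m₀ := by
        rw [← ht, List.take_append_of_le_length (by omega),
          List.take_append_of_le_length (by omega)]
      have heq := hU (q + p) _ h1 _ h2 htk
      apply hvne
      rw [← ht] at heq
      exact List.append_cancel_left heq
  -- choose a uniform level
  obtain ⟨I, hI⟩ := exists_uniform_nat (hAfin m₀)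
    (Q := fun w i => ∀ q, i ≤ q → IsDirectedAut (state f (e^[q] w)))
    (fun w a b ha hab q hbq => ha q (le_trans hab hbq)) hkey
  refine ⟨m₀ + I, fun u hu hnf => ?_⟩
  have huA : u ∈ A (m₀ + I) := ⟨hu, hnf⟩
  have hwA : u.take m₀ ∈ A m₀ := by
    have h2 := hnf
    rw [← List.take_append_drop m₀ u] at h2
    exact ⟨by rw [List.length_take]; omega, not_finitary_prefix h2⟩
  obtain ⟨hlen, hnf', hpre'⟩ := hiter _ hwA.2 I
  have hiA : e^[I] (u.take m₀) ∈ A (m₀ + I) := ⟨by rw [hlen, hwA.1], hnf'⟩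
  have htk : u.take m₀ = (e^[I] (u.take m₀)).take m₀ := by
    obtain ⟨t, ht⟩ := hpre'
    rw [← ht, List.take_append_of_le_length (le_of_eq hwA.1.symm),
      List.take_of_length_le (le_of_eq hwA.1)]
  have := hU I u huA _ hiA htk
  rw [this]
  exact hI _ hwA I le_rfl

end Forward

/-- (Sidki) An automatic automorphism is bounded if and only if it is either
finitary, or all its non-finitary states at some level `m` are directed. -/
theorem bounded_iff_directed_states {X : Type*} [Finite X]
    (α : Equiv.Perm (List X)) (hα : α ∈ treeAut X) (haut : IsAutomatic ⇑α) :
    IsBounded ⇑α ↔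
      (IsFinitary ⇑α ∨ ∃ m : ℕ, ∀ w : List X, w.length = m →
        ¬ IsFinitary (state (⇑α) w) → IsDirectedAut (state (⇑α) w)) := by
  constructor
  · intro hb
    exact Or.inr (directed_states_of_bounded haut hb)
  · rintro (hfin | ⟨m, hm⟩)
    · exact hfin.isBounded
    · refine isBounded_of_states_bounded (m := m) fun w hw => ?_
      by_cases hf : IsFinitary (state (⇑α) w)
      · exact hf.isBounded
      · exact (hm w hw hf).isBounded
end

section
/- If m is a probability measure on a countable set X and (π_i : X → X_i)_{i∈I} is a countable family of maps which separates the points of X (i.e., x = y whenever π_i(x) = π_i(y) for all i), then the entropies satisfy H(m) ≤ ∑_{i∈I} H(π_i m), where π_i m is the image (pushforward) measure of m under π_i. -/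
open List

/-! ### Entropy, convolutions and random walks -/

open scoped ENNReal

noncomputable def negLogE (a : ℝ≥0∞) : ℝ≥0∞ :=
  if a = 0 then ∞ else ENNReal.ofReal (-Real.log a.toReal)

lemma pmf_mul_negLogE {α : Type*} (p : PMF α) (x : α) :
    p x * negLogE (p x) = ENNReal.ofReal (Real.negMulLog (p x).toReal) := by
  by_cases h : p x = 0
  · simp [h, negLogE, Real.negMulLog]
  · have htop : p x ≠ ∞ := PMF.apply_ne_top p x
    have ha : 0 ≤ (p x).toReal := ENNReal.toReal_nonneg
    have h1 : Real.negMulLog (p x).toReal = (p x).toReal * (-Real.log (p x).toReal) := by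
      rw [Real.negMulLog]; ring
    rw [negLogE, if_neg h, h1, ENNReal.ofReal_mul ha, ENNReal.ofReal_toReal htop]

lemma entropy_eq_tsum_negLogE {α : Type*} (m : PMF α) :
    entropy m = ∑' x, m x * negLogE (m x) := by
  unfold entropy
  exact tsum_congr fun x => (pmf_mul_negLogE m x).symm

lemma tsum_map_mul_aux {X Y : Type*} (m : PMF X) (f : X → Y) (g : Y → ℝ≥0∞) :
    ∑' y, (m.map f) y * g y = ∑' x, m x * g (f x) := by
  classical
  have h1 : ∀ x y, (if y = f x then m x else 0) * g y
      = if y = f x then m x * g (f x) else 0 := by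
    intro x y
    split_ifs with h
    · rw [h]
    · rw [zero_mul]
  calc ∑' y, (m.map f) y * g y
      = ∑' y, (∑' x, if y = f x then m x else 0) * g y := by
        simp only [PMF.map_apply]
    _ = ∑' y, ∑' x, (if y = f x then m x else 0) * g y := by
        exact tsum_congr fun y => ENNReal.tsum_mul_right.symm
    _ = ∑' x, ∑' y, (if y = f x then m x else 0) * g y := ENNReal.tsum_comm
    _ = ∑' x, ∑' y, (if y = f x then m x * g (f x) else 0) := by
        exact tsum_congr fun x => tsum_congr fun y => h1 x y
    _ = ∑' x, m x * g (f x) := tsum_congr fun x => tsum_ite_eq (f x) _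

lemma gibbs_real_aux {a b : ℝ} (ha : 0 < a) (hb : 0 < b) :
    Real.negMulLog a + a ≤ a * (-Real.log b) + b := by
  have h := Real.log_le_sub_one_of_pos (show 0 < b / a from div_pos hb ha)
  rw [Real.log_div hb.ne' ha.ne'] at h
  have h2 := mul_le_mul_of_nonneg_left h ha.le
  rw [Real.negMulLog]
  have hdiv : a * (b / a - 1) = b - a := by field_simp
  nlinarith [h2]

lemma key_prod_sum_aux {X : Type*} {I : Type*} {Y : I → Type*} (π : (i : I) → X → Y i)
    (μ : (i : I) → PMF (Y i)) (s : Finset I) :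
    ∀ (F : Finset X),
      (∀ x ∈ F, ∀ y ∈ F, (∀ i ∈ s, π i x = π i y) → x = y) →
      ∑ x ∈ F, ∏ i ∈ s, (μ i) (π i x) ≤ 1 := by
  classical
  induction s using Finset.induction_on with
  | empty =>
    intro F hF
    simp only [Finset.prod_empty]
    rw [Finset.sum_const, nsmul_eq_mul, mul_one]
    have hc : F.card ≤ 1 :=
      Finset.card_le_one.mpr fun a ha b hb => hF a ha b hb (by simp)
    calc (F.card : ℝ≥0∞) ≤ (1 : ℕ) := by exact_mod_cast hc
      _ = 1 := by norm_num
  | @insert j s' hj ih =>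
    intro F hF
    have hmaps : ∀ x ∈ F, π j x ∈ F.image (π j) := fun x hx => Finset.mem_image_of_mem _ hx
    calc ∑ x ∈ F, ∏ i ∈ insert j s', (μ i) (π i x)
        = ∑ y ∈ F.image (π j), ∑ x ∈ F.filter (fun x => π j x = y),
            ∏ i ∈ insert j s', (μ i) (π i x) :=
          (Finset.sum_fiberwise_of_maps_to hmaps _).symm
      _ ≤ ∑ y ∈ F.image (π j), (μ j) y := by
          apply Finset.sum_le_sum
          intro y hy
          have hinner : ∑ x ∈ F.filter (fun x => π j x = y),
              ∏ i ∈ insert j s', (μ i) (π i x)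
              = (μ j) y * ∑ x ∈ F.filter (fun x => π j x = y), ∏ i ∈ s', (μ i) (π i x) := by
            rw [Finset.mul_sum]
            apply Finset.sum_congr rfl
            intro x hx
            have hxy : π j x = y := (Finset.mem_filter.mp hx).2
            rw [Finset.prod_insert hj, hxy]
          rw [hinner]
          have hIH : ∑ x ∈ F.filter (fun x => π j x = y), ∏ i ∈ s', (μ i) (π i x) ≤ 1 := by
            apply ih
            intro a ha b hb hab
            have haF := (Finset.mem_filter.mp ha)
            have hbF := (Finset.mem_filter.mp hb)
            apply hF a haF.1 b hbF.1
            intro i hi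
            rcases Finset.mem_insert.mp hi with h | h
            · subst h; rw [haF.2, hbF.2]
            · exact hab i h
          calc (μ j) y * ∑ x ∈ F.filter (fun x => π j x = y), ∏ i ∈ s', (μ i) (π i x)
              ≤ (μ j) y * 1 := mul_le_mul_right hIH _
            _ = (μ j) y := mul_one _
      _ ≤ ∑' y, (μ j) y := ENNReal.sum_le_tsum _
      _ = 1 := (μ j).tsum_coe

lemma Q_le_prod_aux {I : Type*} (b : I → ℝ≥0∞) (hble : ∀ i, b i ≤ 1) (s : Finset I) :
    (if (∑' i, negLogE (b i)) = ∞ then 0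
      else ENNReal.ofReal (Real.exp (-(∑' i, negLogE (b i)).toReal)))
      ≤ ∏ i ∈ s, b i := by
  classical
  set S := ∑' i, negLogE (b i) with hSdef
  by_cases hS : S = ∞
  · simp [hS]
  rw [if_neg hS]
  have hb0 : ∀ i ∈ s, b i ≠ 0 := by
    intro i _ h0
    apply hS
    have hinf : negLogE (b i) = ∞ := by rw [negLogE, if_pos h0]
    exact eq_top_iff.mpr (hinf ▸ ENNReal.le_tsum i)
  have hbt : ∀ i ∈ s, b i ≠ ∞ := fun i _ => ne_top_of_le_ne_top ENNReal.one_ne_top (hble i)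
  have hbr1 : ∀ i ∈ s, (b i).toReal ≤ 1 := by
    intro i _
    have := ENNReal.toReal_mono ENNReal.one_ne_top (hble i)
    simpa using this
  have hbrpos : ∀ i ∈ s, 0 < (b i).toReal := fun i hi =>
    ENNReal.toReal_pos (hb0 i hi) (hbt i hi)
  have hlognn : ∀ i ∈ s, 0 ≤ -Real.log (b i).toReal := by
    intro i hi
    have := Real.log_nonpos (hbrpos i hi).le (hbr1 i hi)
    linarith
  have hlog : ∀ i ∈ s, negLogE (b i) = ENNReal.ofReal (-Real.log (b i).toReal) :=
    fun i hi => if_neg (hb0 i hi)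
  have hsum_le : ∑ i ∈ s, negLogE (b i) ≤ S := ENNReal.sum_le_tsum s
  have hsum_ne : ∑ i ∈ s, negLogE (b i) ≠ ∞ := ne_top_of_le_ne_top hS hsum_le
  have htoReal : (∑ i ∈ s, negLogE (b i)).toReal = ∑ i ∈ s, (-Real.log (b i).toReal) := by
    rw [ENNReal.toReal_sum (fun i hi => (hlog i hi) ▸ ENNReal.ofReal_ne_top)]
    exact Finset.sum_congr rfl fun i hi => by
      rw [hlog i hi, ENNReal.toReal_ofReal (hlognn i hi)]
  have hle : ∑ i ∈ s, (-Real.log (b i).toReal) ≤ S.toReal := by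
    rw [← htoReal]; exact ENNReal.toReal_mono hS hsum_le
  have hexp : Real.exp (-(S.toReal)) ≤ ∏ i ∈ s, (b i).toReal := by
    have h1 : -(S.toReal) ≤ ∑ i ∈ s, Real.log (b i).toReal := by
      have : ∑ i ∈ s, (-Real.log (b i).toReal) = -∑ i ∈ s, Real.log (b i).toReal :=
        Finset.sum_neg_distrib _
      linarith [hle, this.symm.le, this.le]
    calc Real.exp (-(S.toReal)) ≤ Real.exp (∑ i ∈ s, Real.log (b i).toReal) :=
          Real.exp_le_exp.mpr h1
      _ = ∏ i ∈ s, Real.exp (Real.log (b i).toReal) := Real.exp_sum s _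
      _ = ∏ i ∈ s, (b i).toReal :=
          Finset.prod_congr rfl fun i hi => Real.exp_log (hbrpos i hi)
  calc ENNReal.ofReal (Real.exp (-(S.toReal)))
      ≤ ENNReal.ofReal (∏ i ∈ s, (b i).toReal) := ENNReal.ofReal_le_ofReal hexp
    _ = ENNReal.ofReal ((∏ i ∈ s, b i).toReal) := by rw [ENNReal.toReal_prod]
    _ = ∏ i ∈ s, b i := ENNReal.ofReal_toReal (ENNReal.prod_ne_top hbt)

lemma gibbs_pointwise_aux {a : ℝ≥0∞} (ha1 : a ≤ 1) (S : ℝ≥0∞) :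
    ENNReal.ofReal (Real.negMulLog a.toReal) + a
      ≤ a * S + (if S = ∞ then 0 else ENNReal.ofReal (Real.exp (-(S.toReal)))) := by
  by_cases h0 : a = 0
  · simp [h0, Real.negMulLog]
  by_cases hS : S = ∞
  · rw [hS, ENNReal.mul_top h0]
    exact le_top
  rw [if_neg hS]
  have hat : a ≠ ∞ := ne_top_of_le_ne_top ENNReal.one_ne_top ha1
  have harpos : 0 < a.toReal := ENNReal.toReal_pos h0 hat
  have har1 : a.toReal ≤ 1 := by
    have := ENNReal.toReal_mono ENNReal.one_ne_top ha1
    simpa using this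
  have hbpos : 0 < Real.exp (-(S.toReal)) := Real.exp_pos _
  have hreal : Real.negMulLog a.toReal + a.toReal
      ≤ a.toReal * S.toReal + Real.exp (-(S.toReal)) := by
    have h := gibbs_real_aux harpos hbpos
    rw [Real.log_exp] at h
    simpa using h
  have hsnn : 0 ≤ S.toReal := ENNReal.toReal_nonneg
  calc ENNReal.ofReal (Real.negMulLog a.toReal) + a
      = ENNReal.ofReal (Real.negMulLog a.toReal + a.toReal) := by
        rw [ENNReal.ofReal_add (Real.negMulLog_nonneg harpos.le har1) ENNReal.toReal_nonneg,
          ENNReal.ofReal_toReal hat]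
    _ ≤ ENNReal.ofReal (a.toReal * S.toReal + Real.exp (-(S.toReal))) :=
        ENNReal.ofReal_le_ofReal hreal
    _ = ENNReal.ofReal (a.toReal * S.toReal) + ENNReal.ofReal (Real.exp (-(S.toReal))) :=
        ENNReal.ofReal_add (mul_nonneg ENNReal.toReal_nonneg hsnn) hbpos.le
    _ = a * S + ENNReal.ofReal (Real.exp (-(S.toReal))) := by
        rw [ENNReal.ofReal_mul ENNReal.toReal_nonneg, ENNReal.ofReal_toReal hat,
          ENNReal.ofReal_toReal hS]

/-- If a countable family of maps `π_i : X → Y_i` separates the points of a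
countable set `X`, then the entropy of a probability measure `m` on `X` does
not exceed the sum of the entropies of its images `π_i m`. -/
theorem entropy_le_tsum_entropy_map {X : Type*} [Countable X] {I : Type*}
    [Countable I] (Y : I → Type*) (π : (i : I) → X → Y i)
    (hsep : ∀ x y : X, (∀ i, π i x = π i y) → x = y) (m : PMF X) :
    entropy m ≤ ∑' i, entropy (m.map (π i)) := by
  classical
  by_cases hI : Nonempty I
  · set μ := fun i => m.map (π i) with hμ
    set S := fun x => ∑' i, negLogE ((μ i) (π i x)) with hSdef
    set Q := fun x => if S x = ∞ then 0 else ENNReal.ofReal (Real.exp (-(S x).toReal)) with hQdef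
    have hpt : ∀ x, ENNReal.ofReal (Real.negMulLog (m x).toReal) + m x ≤ m x * S x + Q x :=
      fun x => gibbs_pointwise_aux (m.coe_le_one x) (S x)
    have hgex : ∀ x y : X, x ≠ y → ∃ i, π i x ≠ π i y := by
      intro x y hxy
      by_contra h
      push_neg at h
      exact hxy (hsep x y h)
    have hQsum : ∑' x, Q x ≤ 1 := by
      rw [ENNReal.tsum_eq_iSup_sum]
      apply iSup_le
      intro F
      let g : X × X → I := fun p =>
        if h : ∃ i, π i p.1 ≠ π i p.2 then h.choose else Classical.arbitrary I
      let s : Finset I := (F ×ˢ F).image g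
      have hsepF : ∀ x ∈ F, ∀ y ∈ F, (∀ i ∈ s, π i x = π i y) → x = y := by
        intro x hx y hy hall
        by_contra hxy
        have hex := hgex x y hxy
        have hgs : g (x, y) ∈ s :=
          Finset.mem_image_of_mem g (Finset.mem_product.mpr ⟨hx, hy⟩)
        have hne : π (g (x, y)) x ≠ π (g (x, y)) y := by
          simp only [g]
          rw [dif_pos hex]
          exact hex.choose_spec
        exact hne (hall _ hgs)
      calc ∑ x ∈ F, Q x ≤ ∑ x ∈ F, ∏ i ∈ s, (μ i) (π i x) := by
            apply Finset.sum_le_sum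
            intro x _
            exact Q_le_prod_aux (fun i => (μ i) (π i x)) (fun i => (μ i).coe_le_one _) s
        _ ≤ 1 := key_prod_sum_aux π μ s F hsepF
    have hchain : ∑' x, m x * S x = ∑' i, entropy (μ i) := by
      calc ∑' x, m x * S x = ∑' x, ∑' i, m x * negLogE ((μ i) (π i x)) :=
            tsum_congr fun x => ENNReal.tsum_mul_left.symm
        _ = ∑' i, ∑' x, m x * negLogE ((μ i) (π i x)) := ENNReal.tsum_comm
        _ = ∑' i, ∑' y, (μ i) y * negLogE ((μ i) y) :=
            tsum_congr fun i => (tsum_map_mul_aux m (π i) (fun y => negLogE ((μ i) y))).symm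
        _ = ∑' i, entropy (μ i) := tsum_congr fun i => (entropy_eq_tsum_negLogE (μ i)).symm
    have hmain : entropy m + 1 ≤ (∑' x, m x * S x) + 1 := by
      calc entropy m + 1
          = (∑' x, ENNReal.ofReal (Real.negMulLog (m x).toReal)) + ∑' x, m x := by
            rw [m.tsum_coe]
            rfl
        _ = ∑' x, (ENNReal.ofReal (Real.negMulLog (m x).toReal) + m x) := ENNReal.tsum_add.symm
        _ ≤ ∑' x, (m x * S x + Q x) := ENNReal.tsum_le_tsum hpt
        _ = (∑' x, m x * S x) + ∑' x, Q x := ENNReal.tsum_add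
        _ ≤ (∑' x, m x * S x) + 1 := add_le_add_right hQsum _
    have hfin := (ENNReal.add_le_add_iff_right ENNReal.one_ne_top).mp hmain
    rw [hchain] at hfin
    exact hfin
  · have hsub : ∀ x y : X, x = y := fun x y => hsep x y (fun i => absurd ⟨i⟩ hI)
    have hX : ∃ x : X, m x ≠ 0 := by
      by_contra h
      push_neg at h
      have h1 := m.tsum_coe
      simp [h] at h1
    obtain ⟨x0, _⟩ := hX
    have hsingle : ∀ (f : X → ℝ≥0∞), ∑' x, f x = f x0 :=
      fun f => tsum_eq_single x0 fun b hb => (hb (hsub b x0)).elim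
    have hm1 : m x0 = 1 := by
      rw [← m.tsum_coe, hsingle]
    have hent : entropy m = 0 := by
      unfold entropy
      rw [hsingle, hm1]
      simp [Real.negMulLog]
    rw [hent]
    exact zero_le
end
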